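/- arXiv:1211.4517 — 6 statements merged into one kernel-verified Lean document; each statement's English description precedes it below -/
import Mathlib

section
/- Let (A,I) be a finite independence alphabet with |A| = N, let m = N!, and let φ be an endomorphism of the trace monoid M(A,I). Then Per φ = Fix φ^m, i.e., every periodic point of φ is a fixed point of the m-th iterate of φ. -/
/-- The defining relation of the trace monoid: `ab = ba` whenever `(a,b) ∈ I`. -/
def traceRel (A : Type) (I : A → A → Prop) : FreeMonoid A → FreeMonoid A → Prop :=
  fun x y => ∃ a b : A, I a b ∧ x = FreeMonoid.of a * FreeMonoid.of b ∧
    y = FreeMonoid.of b * FreeMonoid.of a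

/-- The congruence on the free monoid generated by the trace relations. -/
def traceCon (A : Type) (I : A → A → Prop) : Con (FreeMonoid A) :=
  conGen (traceRel A I)

/-- The trace monoid `M(A,I)`, the quotient of the free monoid on `A` by the
congruence generated by `{(ab, ba) : (a,b) ∈ I}`. -/
abbrev TraceMonoid (A : Type) (I : A → A → Prop) := (traceCon A I).Quotient


namespace TraceAux

noncomputable section
open Classical

variable {A : Type} (I : A → A → Prop)

/-- the generator of the trace monoid -/
def tof (a : A) : TraceMonoid A I := (traceCon A I).mk' (FreeMonoid.of a)

/-- product of a list of generators -/
def prodL (l : List A) : TraceMonoid A I := (l.map (tof I)).prod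

variable {I}

@[simp] lemma prodL_nil : prodL I ([] : List A) = 1 := rfl

@[simp] lemma prodL_cons (a : A) (l : List A) :
    prodL I (a :: l) = tof I a * prodL I l := by
  simp [prodL]

lemma prodL_append (l₁ l₂ : List A) :
    prodL I (l₁ ++ l₂) = prodL I l₁ * prodL I l₂ := by
  simp [prodL]

lemma exists_prodL (x : TraceMonoid A I) : ∃ l : List A, x = prodL I l := by
  obtain ⟨w, rfl⟩ := Con.mk'_surjective (c := traceCon A I) x
  refine ⟨FreeMonoid.toList w, ?_⟩
  have h : (traceCon A I).mk' = FreeMonoid.lift (tof I) :=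
    FreeMonoid.hom_eq (fun a => (FreeMonoid.lift_eval_of _ _).symm)
  rw [h, FreeMonoid.lift_apply]
  rfl

lemma hom_ext {N : Type*} [Monoid N] (f g : TraceMonoid A I →* N)
    (h : ∀ a, f (tof I a) = g (tof I a)) : ∀ x, f x = g x := by
  intro x
  obtain ⟨l, rfl⟩ := exists_prodL x
  induction l with
  | nil => simp
  | cons a t ih => rw [prodL_cons, map_mul, map_mul, h, ih]

variable (I) in
def buildHom {N : Type*} [Monoid N] (f : A → N)
    (hf : ∀ a b, I a b → f a * f b = f b * f a) : TraceMonoid A I →* N :=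
  (traceCon A I).lift (FreeMonoid.lift f) (Con.conGen_le.mpr (by
    rintro x y ⟨a, b, hI, rfl, rfl⟩
    rw [Con.ker_rel, map_mul, map_mul, FreeMonoid.lift_eval_of, FreeMonoid.lift_eval_of]
    exact hf a b hI))

@[simp] lemma buildHom_tof {N : Type*} [Monoid N] (f : A → N)
    (hf : ∀ a b, I a b → f a * f b = f b * f a) (a : A) :
    buildHom I f hf (tof I a) = f a := by
  rw [tof, buildHom]
  exact FreeMonoid.lift_eval_of _ _

lemma hom_prodL {N : Type*} [Monoid N] (f : TraceMonoid A I →* N) (l : List A) :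
    f (prodL I l) = (l.map (fun a => f (tof I a))).prod := by
  induction l with
  | nil => simp
  | cons a t ih => simp [ih]

/-- the length homomorphism -/
def len : TraceMonoid A I →* Multiplicative ℕ :=
  buildHom I (fun _ => Multiplicative.ofAdd 1) (fun _ _ _ => mul_comm _ _)

def tlen (x : TraceMonoid A I) : ℕ := Multiplicative.toAdd (len x)

@[simp] lemma tlen_one : tlen (1 : TraceMonoid A I) = 0 := by
  simp [tlen, len]

@[simp] lemma tlen_mul (x y : TraceMonoid A I) : tlen (x * y) = tlen x + tlen y := by
  simp [tlen, map_mul]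

@[simp] lemma tlen_tof (a : A) : tlen (tof I a) = 1 := by
  simp [tlen, len]

@[simp] lemma tlen_prodL (l : List A) : tlen (prodL I l) = l.length := by
  induction l with
  | nil => simp
  | cons a t ih => simp [ih, Nat.add_comm]

lemma eq_one_of_tlen_eq_zero {x : TraceMonoid A I} (h : tlen x = 0) : x = 1 := by
  obtain ⟨l, rfl⟩ := exists_prodL x
  rw [tlen_prodL, List.length_eq_zero_iff] at h
  simp [h]

lemma tof_ne_one (a : A) : tof I a ≠ 1 := by
  intro h
  have := tlen_tof (I := I) a
  rw [h, tlen_one] at this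
  exact one_ne_zero this.symm

lemma mul_eq_one' {x y : TraceMonoid A I} (h : x * y = 1) : x = 1 ∧ y = 1 := by
  have h' : tlen x + tlen y = 0 := by rw [← tlen_mul, h, tlen_one]
  exact ⟨eq_one_of_tlen_eq_zero (Nat.eq_zero_of_add_eq_zero_right h'),
    eq_one_of_tlen_eq_zero (Nat.eq_zero_of_add_eq_zero_left h')⟩

lemma eq_one_of_prod_eq_one : ∀ (L : List (TraceMonoid A I)), L.prod = 1 →
    ∀ u ∈ L, u = 1 := by
  intro L
  induction L with
  | nil => simp
  | cons a t ih =>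
    intro h u hu
    rw [List.prod_cons] at h
    obtain ⟨h1, h2⟩ := mul_eq_one' h
    rcases List.mem_cons.mp hu with hu | hu
    · rw [hu]; exact h1
    · exact ih h2 u hu

lemma exists_tof_of_tlen_one {x : TraceMonoid A I} (h : tlen x = 1) : ∃ a, x = tof I a := by
  obtain ⟨l, rfl⟩ := exists_prodL x
  rw [tlen_prodL, List.length_eq_one_iff] at h
  obtain ⟨a, rfl⟩ := h
  exact ⟨a, by simp⟩

/-- the counting homomorphism -/
def cnt (a : A) : TraceMonoid A I →* Multiplicative ℕ :=
  buildHom I (fun b => Multiplicative.ofAdd (if b = a then 1 else 0))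
    (fun _ _ _ => mul_comm _ _)

def tcnt (a : A) (x : TraceMonoid A I) : ℕ := Multiplicative.toAdd (cnt a x)

@[simp] lemma tcnt_mul (a : A) (x y : TraceMonoid A I) :
    tcnt a (x * y) = tcnt a x + tcnt a y := by simp [tcnt, map_mul]

@[simp] lemma tcnt_tof (a b : A) : tcnt a (tof I b) = if b = a then 1 else 0 := by
  simp [tcnt, cnt]

lemma mem_of_tcnt_pos {a : A} {l : List A} (h : 0 < tcnt a (prodL I l)) : a ∈ l := by
  induction l with
  | nil => simp [tcnt, cnt] at h
  | cons b t ih =>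
    rw [prodL_cons, tcnt_mul] at h
    by_cases hb : b = a
    · simp [hb]
    · right
      refine ih ?_
      simpa [tcnt_tof, hb] using h

lemma tcnt_pos_of_mem {a : A} {l : List A} (h : a ∈ l) : 0 < tcnt a (prodL I l) := by
  induction l with
  | nil => simp at h
  | cons b t ih =>
    rw [prodL_cons, tcnt_mul]
    rcases List.mem_cons.mp h with h | h
    · simp [h]
    · exact Nat.lt_of_lt_of_le (ih h) (Nat.le_add_left _ _)

lemma tof_comm {a b : A} (h : I a b) : tof I a * tof I b = tof I b * tof I a := by
  have e1 : tof I a * tof I b = (traceCon A I).mk' (FreeMonoid.of a * FreeMonoid.of b) :=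
    (map_mul _ _ _).symm
  have e2 : tof I b * tof I a = (traceCon A I).mk' (FreeMonoid.of b * FreeMonoid.of a) :=
    (map_mul _ _ _).symm
  rw [e1, e2]
  exact (Con.eq _).mpr (ConGen.Rel.of _ _ ⟨a, b, h, rfl, rfl⟩)

end
end TraceAux

namespace TraceAux

section EndPow
variable {M : Type*} [Monoid M]

lemma end_pow_succ (φ : Monoid.End M) (k : ℕ) (x : M) :
    (φ ^ (k + 1)) x = (φ ^ k) (φ x) := by rw [pow_succ]; rfl

lemma end_pow_succ' (φ : Monoid.End M) (k : ℕ) (x : M) :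
    (φ ^ (k + 1)) x = φ ((φ ^ k) x) := by rw [pow_succ']; rfl

lemma end_pow_add (φ : Monoid.End M) (j k : ℕ) (x : M) :
    (φ ^ (j + k)) x = (φ ^ j) ((φ ^ k) x) := by rw [pow_add]; rfl

lemma end_pow_zero (φ : Monoid.End M) (x : M) : (φ ^ 0) x = x := rfl

lemma pow_fix (ψ : Monoid.End M) (x : M) (h : ψ x = x) : ∀ t, (ψ ^ t) x = x := by
  intro t
  induction t with
  | zero => rfl
  | succ t ih => rw [end_pow_succ, h, ih]

lemma fix_dvd (φ : Monoid.End M) (x : M) (m k : ℕ) (h : (φ ^ m) x = x) (hd : m ∣ k) :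
    (φ ^ k) x = x := by
  obtain ⟨t, rfl⟩ := hd
  rw [pow_mul]
  exact pow_fix _ _ h t

end EndPow

lemma case1 {A : Type} [Fintype A] {I : A → A → Prop} (φ : Monoid.End (TraceMonoid A I))
    (hE : ∀ a : A, φ (tof I a) ≠ 1) (x : TraceMonoid A I) (n : ℕ) (hn : 1 ≤ n)
    (hx : (φ ^ n) x = x) : (φ ^ Nat.factorial (Fintype.card A)) x = x := by
  classical
  have hstep : ∀ u : TraceMonoid A I, tlen u ≤ tlen (φ u) := by
    intro u
    obtain ⟨l, rfl⟩ := exists_prodL u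
    induction l with
    | nil => simp
    | cons a t ih =>
      rw [prodL_cons, map_mul, tlen_mul, tlen_mul, tlen_tof]
      have h1 : 1 ≤ tlen (φ (tof I a)) :=
        Nat.one_le_iff_ne_zero.mpr (fun h => hE a (eq_one_of_tlen_eq_zero h))
      exact Nat.add_le_add h1 ih
  have hper : ∀ t, (φ ^ (n * t)) x = x := by
    intro t
    rw [pow_mul]
    exact pow_fix _ _ hx t
  have hmono : ∀ j k, j ≤ k → tlen ((φ ^ j) x) ≤ tlen ((φ ^ k) x) := by
    intro j k hjk
    induction k, hjk using Nat.le_induction with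
    | base => exact le_refl _
    | succ k hjk ih =>
      rw [end_pow_succ']
      exact le_trans ih (hstep _)
  have hconst : ∀ k, tlen ((φ ^ k) x) = tlen x := by
    intro k
    have h1 : tlen x ≤ tlen ((φ ^ k) x) := by
      have := hmono 0 k (Nat.zero_le k)
      rwa [end_pow_zero] at this
    have h2 : tlen ((φ ^ k) x) ≤ tlen x := by
      have hk : k ≤ n * k := Nat.le_mul_of_pos_left k hn
      have := hmono k (n * k) hk
      rwa [hper k] at this
    omega
  have hletter : ∀ a k, 0 < tcnt a ((φ ^ k) x) → ∃ b, φ (tof I a) = tof I b := by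
    intro a k hk
    obtain ⟨l, hl⟩ := exists_prodL ((φ ^ k) x)
    have ha : a ∈ l := mem_of_tcnt_pos (hl ▸ hk)
    obtain ⟨s, t, rfl⟩ := List.append_of_mem ha
    have hsplit : (φ ^ k) x = prodL I s * (tof I a * prodL I t) := by
      rw [hl, prodL_append, prodL_cons]
    have hlen1 : tlen ((φ ^ (k + 1)) x) = tlen ((φ ^ k) x) := by rw [hconst, hconst]
    have hφ : (φ ^ (k + 1)) x = φ (prodL I s) * (φ (tof I a) * φ (prodL I t)) := by
      rw [end_pow_succ', hsplit, map_mul, map_mul]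
    have key : tlen (φ (prodL I s)) + (tlen (φ (tof I a)) + tlen (φ (prodL I t)))
        = tlen (prodL I s) + (tlen (tof I a) + tlen (prodL I t)) := by
      rw [← tlen_mul, ← tlen_mul, ← tlen_mul, ← tlen_mul, ← hφ, ← hsplit, hlen1]
    have h1 := hstep (prodL I s)
    have h2 := hstep (prodL I t)
    have h4 : 1 ≤ tlen (φ (tof I a)) :=
      Nat.one_le_iff_ne_zero.mpr (fun h => hE a (eq_one_of_tlen_eq_zero h))
    have h3 : tlen (φ (tof I a)) = 1 := by
      rw [tlen_tof] at key
      omega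
    exact exists_tof_of_tlen_one h3
  set g : A → A := fun a => if h : ∃ b, φ (tof I a) = tof I b then h.choose else a with hgdef
  have hg : ∀ a, (∃ b, φ (tof I a) = tof I b) → φ (tof I a) = tof I (g a) := by
    intro a h
    simp only [hgdef, dif_pos h]
    exact h.choose_spec
  set S : Set A := {a | ∃ k, 0 < tcnt a ((φ ^ k) x)} with hSdef
  have hgS : ∀ a ∈ S, φ (tof I a) = tof I (g a) := by
    rintro a ⟨k, hk⟩
    exact hg a (hletter a k hk)
  have hmem : ∀ (k : ℕ) (l : List A), (φ ^ k) x = prodL I l → ∀ b ∈ l, b ∈ S :=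
    fun k l hl b hb => ⟨k, hl ▸ tcnt_pos_of_mem hb⟩
  have hlist : ∀ l : List A, (∀ b ∈ l, b ∈ S) → φ (prodL I l) = prodL I (l.map g) := by
    intro l hl
    induction l with
    | nil => simp
    | cons a t ih =>
      rw [prodL_cons, map_mul, hgS a (hl a (by simp)), List.map_cons, prodL_cons,
        ih (fun b hb => hl b (by simp [hb]))]
  have hclosed : ∀ a ∈ S, g a ∈ S := by
    rintro a ⟨k, hk⟩
    obtain ⟨l, hl⟩ := exists_prodL ((φ ^ k) x)
    have ha : a ∈ l := mem_of_tcnt_pos (hl ▸ hk)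
    have hnext : (φ ^ (k + 1)) x = prodL I (l.map g) := by
      rw [end_pow_succ', hl, hlist l (hmem k l hl)]
    exact ⟨k + 1, hnext ▸ tcnt_pos_of_mem (List.mem_map_of_mem (f := g) ha)⟩
  have hsurj : ∀ b ∈ S, ∃ a ∈ S, g a = b := by
    rintro b ⟨k, hk⟩
    have hk' : 0 < tcnt b ((φ ^ (k + n)) x) := by
      rw [end_pow_add, hx]
      exact hk
    have hkn : k + n = (k + n - 1) + 1 := by omega
    obtain ⟨l, hl⟩ := exists_prodL ((φ ^ (k + n - 1)) x)
    have hnext : (φ ^ (k + n)) x = prodL I (l.map g) := by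
      rw [hkn, end_pow_succ', hl, hlist l (hmem _ l hl)]
    rw [hnext] at hk'
    obtain ⟨a, hal, hab⟩ := List.mem_map.mp (mem_of_tcnt_pos hk')
    exact ⟨a, hmem _ l hl a hal, hab⟩
  haveI : DecidablePred (· ∈ S) := fun _ => Classical.propDecidable _
  set σ : ↥S → ↥S := fun a => ⟨g a.1, hclosed a.1 a.2⟩ with hσ
  have hσs : Function.Surjective σ := by
    rintro ⟨b, hb⟩
    obtain ⟨a, ha, hab⟩ := hsurj b hb
    exact ⟨⟨a, ha⟩, Subtype.ext hab⟩
  have hbij : Function.Bijective σ := Finite.surjective_iff_bijective.mp hσs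
  set e : Equiv.Perm ↥S := Equiv.ofBijective σ hbij with he
  have hM : orderOf e ∣ Nat.factorial (Fintype.card A) := by
    refine dvd_trans orderOf_dvd_card ?_
    rw [Fintype.card_perm]
    exact Nat.factorial_dvd_factorial (Fintype.card_subtype_le _)
  have heM : e ^ Nat.factorial (Fintype.card A) = 1 := orderOf_dvd_iff_pow_eq_one.mp hM
  have hiter : ∀ (j : ℕ) (a : ↥S), ((e ^ j) a : A) = g^[j] a.1 := by
    intro j
    induction j with
    | zero => intro a; simp
    | succ j ih =>
      intro a
      rw [pow_succ, Equiv.Perm.mul_apply, Function.iterate_succ_apply, ih (e a)]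
      rfl
  have hfixg : ∀ a ∈ S, g^[Nat.factorial (Fintype.card A)] a = a := by
    intro a ha
    have h := hiter (Nat.factorial (Fintype.card A)) ⟨a, ha⟩
    rw [heM] at h
    simpa using h.symm
  have hpowlist : ∀ (j : ℕ) (l : List A), (∀ b ∈ l, b ∈ S) →
      (φ ^ j) (prodL I l) = prodL I (l.map g^[j]) := by
    intro j
    induction j with
    | zero =>
      intro l hl
      simp [end_pow_zero]
    | succ j ih =>
      intro l hl
      rw [end_pow_succ, hlist l hl, ih (l.map g)
        (by
          intro b hb
          obtain ⟨a, hal, rfl⟩ := List.mem_map.mp hb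
          exact hclosed a (hl a hal)),
        List.map_map, ← Function.iterate_succ g j]
  obtain ⟨l₀, hl₀⟩ := exists_prodL x
  have hl₀S : ∀ b ∈ l₀, b ∈ S := hmem 0 l₀ (by rw [end_pow_zero]; exact hl₀)
  rw [hl₀, hpowlist _ l₀ hl₀S,
    List.map_congr_left (fun a ha => hfixg a (hl₀S a ha))]
  simp


theorem aux : ∀ (N : ℕ) (A : Type) [Fintype A] (I : A → A → Prop),
    Fintype.card A = N →
    ∀ (φ : Monoid.End (TraceMonoid A I)) (x : TraceMonoid A I) (n : ℕ),
      1 ≤ n → (φ ^ n) x = x → (φ ^ Nat.factorial (Fintype.card A)) x = x := by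
  intro N
  induction N using Nat.strong_induction_on with
  | _ N IH =>
    intro A _ I hA φ x n hn hx
    by_cases hE : ∀ a : A, φ (tof I a) ≠ 1
    · exact case1 φ hE x n hn hx
    · push_neg at hE
      obtain ⟨a₀, ha₀⟩ := hE
      classical
      set mort : A → Prop := fun a => ∃ k, (φ ^ k) (tof I a) = 1 with hmort
      have hm₀ : mort a₀ := ⟨1, by rwa [pow_one]⟩
      set IB : {a : A // ¬ mort a} → {a : A // ¬ mort a} → Prop :=
        fun b c => I b.1 c.1 with hIB
      have hcardB : Fintype.card {a : A // ¬ mort a} < Fintype.card A :=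
        Fintype.card_subtype_lt (x := a₀) (not_not_intro hm₀)
      set π : TraceMonoid A I →* TraceMonoid {a : A // ¬ mort a} IB :=
        buildHom I (fun a => if h : mort a then 1 else tof IB ⟨a, h⟩)
          (fun a b hI => by
            by_cases ha : mort a
            · simp [dif_pos ha]
            · by_cases hb : mort b
              · simp [dif_pos hb, dif_neg ha]
              · rw [dif_neg ha, dif_neg hb]
                exact tof_comm hI) with hπdef
      set ι : TraceMonoid {a : A // ¬ mort a} IB →* TraceMonoid A I :=
        buildHom IB (fun b => tof I b.1) (fun b c h => tof_comm h) with hιdef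
      have hπ_tof : ∀ a : A, π (tof I a) = if h : mort a then 1 else tof IB ⟨a, h⟩ :=
        fun a => buildHom_tof _ _ a
      have hι_tof : ∀ b, ι (tof IB b) = tof I b.1 := fun b => buildHom_tof _ _ b
      set φB : Monoid.End (TraceMonoid {a : A // ¬ mort a} IB) :=
        π.comp ((φ : TraceMonoid A I →* TraceMonoid A I).comp ι) with hφB
      have hmortal_letters : ∀ a, mort a → ∀ (l : List A), φ (tof I a) = prodL I l →
          ∀ b ∈ l, mort b := by
        rintro a ⟨k, hk⟩ l hl b hb
        cases k with
        | zero => exact absurd hk (by rw [end_pow_zero]; exact tof_ne_one a)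
        | succ k =>
          have h1 : (φ ^ k) (φ (tof I a)) = 1 := by rw [← end_pow_succ]; exact hk
          rw [hl] at h1
          erw [hom_prodL (φ ^ k : TraceMonoid A I →* TraceMonoid A I)] at h1
          exact ⟨k, eq_one_of_prod_eq_one _ h1 ((φ ^ k) (tof I b))
            (List.mem_map_of_mem hb)⟩
      have hcomm : ∀ u, π (φ u) = φB (π u) := by
        refine hom_ext (π.comp (φ : TraceMonoid A I →* TraceMonoid A I)) (φB.comp π) ?_
        intro a
        by_cases ha : mort a
        · obtain ⟨l, hl⟩ := exists_prodL (φ (tof I a))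
          have hml := hmortal_letters a ha l hl
          have hπ1 : π (φ (tof I a)) = 1 := by
            rw [hl, hom_prodL]
            refine List.prod_eq_one ?_
            intro u hu
            obtain ⟨b, hb, rfl⟩ := List.mem_map.mp hu
            rw [hπ_tof, dif_pos (hml b hb)]
          show π (φ (tof I a)) = φB (π (tof I a))
          rw [hπ1, hπ_tof, dif_pos ha,
            map_one]
        · show π (φ (tof I a)) = φB (π (tof I a))
          rw [hπ_tof, dif_neg ha, hφB]
          show π (φ (tof I a)) = π (φ (ι (tof IB ⟨a, ha⟩)))
          rw [hι_tof]
      have hcommk : ∀ (k : ℕ) (u), π ((φ ^ k) u) = (φB ^ k) (π u) := by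
        intro k
        induction k with
        | zero => intro u; rw [end_pow_zero, end_pow_zero]
        | succ k ih =>
          intro u
          rw [end_pow_succ, end_pow_succ, ih (φ u), hcomm u]
      have hdeath_mono : ∀ (a : A) (k : ℕ), (φ ^ k) (tof I a) = 1 →
          ∀ K, k ≤ K → (φ ^ K) (tof I a) = 1 := by
        intro a k hk K hK
        induction K, hK using Nat.le_induction with
        | base => exact hk
        | succ K hK ih => rw [end_pow_succ', ih, map_one]
      set K₀ : ℕ := Finset.univ.sup
        (fun a : A => if h : mort a then Classical.choose h else 0) with hK₀def
      have hK₀ : ∀ (a : A), mort a → ∀ K, K₀ ≤ K → (φ ^ K) (tof I a) = 1 := by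
        intro a ha K hK
        have h1 : (if h : mort a then Classical.choose h else 0) ≤ K₀ :=
          Finset.le_sup (f := fun a : A => if h : mort a then Classical.choose h else 0)
            (Finset.mem_univ a)
        rw [dif_pos ha] at h1
        exact hdeath_mono a _ (Classical.choose_spec ha) K (le_trans h1 hK)
      have hcoll : ∀ K, K₀ ≤ K → ∀ u, (φ ^ K) u = (φ ^ K) (ι (π u)) := by
        intro K hK
        refine hom_ext ((φ ^ K : Monoid.End _) : TraceMonoid A I →* TraceMonoid A I)
          (((φ ^ K : Monoid.End _) : TraceMonoid A I →* TraceMonoid A I).comp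
            (ι.comp π)) ?_
        intro a
        by_cases ha : mort a
        · show (φ ^ K) (tof I a) = (φ ^ K) (ι (π (tof I a)))
          rw [hπ_tof, dif_pos ha, map_one, map_one, hK₀ a ha K hK]
        · show (φ ^ K) (tof I a) = (φ ^ K) (ι (π (tof I a)))
          rw [hπ_tof, dif_neg ha, hι_tof]
      have hxB : (φB ^ n) (π x) = π x := by rw [← hcommk, hx]
      have hIH := IH (Fintype.card {a : A // ¬ mort a}) (hA ▸ hcardB) _ IB rfl
        φB (π x) n hn hxB
      have hBM : (φB ^ Nat.factorial (Fintype.card A)) (π x) = π x :=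
        fix_dvd _ _ _ _ hIH (Nat.factorial_dvd_factorial (le_of_lt hcardB))
      have hKK₀ : K₀ ≤ n * (K₀ + 1) :=
        le_trans (Nat.le_succ _) (Nat.le_mul_of_pos_left _ hn)
      have hfixK : (φ ^ (n * (K₀ + 1))) x = x := fix_dvd φ x n _ hx ⟨K₀ + 1, rfl⟩
      calc (φ ^ Nat.factorial (Fintype.card A)) x
          = (φ ^ Nat.factorial (Fintype.card A)) ((φ ^ (n * (K₀ + 1))) x) := by
            rw [hfixK]
        _ = (φ ^ (Nat.factorial (Fintype.card A) + n * (K₀ + 1))) x :=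
            (end_pow_add φ _ _ x).symm
        _ = (φ ^ (n * (K₀ + 1) + Nat.factorial (Fintype.card A))) x := by
            rw [Nat.add_comm]
        _ = (φ ^ (n * (K₀ + 1))) ((φ ^ Nat.factorial (Fintype.card A)) x) :=
            end_pow_add φ _ _ x
        _ = (φ ^ (n * (K₀ + 1))) (ι (π ((φ ^ Nat.factorial (Fintype.card A)) x))) :=
            hcoll _ hKK₀ _
        _ = (φ ^ (n * (K₀ + 1))) (ι ((φB ^ Nat.factorial (Fintype.card A)) (π x))) := by
            rw [hcommk]
        _ = (φ ^ (n * (K₀ + 1))) (ι (π x)) := by rw [hBM]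
        _ = (φ ^ (n * (K₀ + 1))) x := (hcoll _ hKK₀ x).symm
        _ = x := hfixK

end TraceAux


/-- For `m = |A|!`, the periodic points of an endomorphism `φ` of the trace monoid
`M(A,I)` are exactly the fixed points of `φ^m`. -/
theorem per_eq_fix_pow_factorial (A : Type) [Fintype A] (I : A → A → Prop)
    (hsym : Symmetric I) (hirr : Irreflexive I)
    (φ : Monoid.End (TraceMonoid A I)) :
    ∀ x : TraceMonoid A I,
      (∃ n : ℕ, 1 ≤ n ∧ (φ ^ n) x = x) ↔
        (φ ^ Nat.factorial (Fintype.card A)) x = x := by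
  intro x
  constructor
  · rintro ⟨n, hn, hx⟩
    exact TraceAux.aux (Fintype.card A) A I rfl φ x n hn hx
  · intro h
    exact ⟨Nat.factorial (Fintype.card A),
      Nat.one_le_iff_ne_zero.mpr (Nat.factorial_ne_zero _), h⟩
end

section
/- Let (A,I) be a finite independence alphabet and let φ be an endomorphism of the trace monoid M(A,I) such that φ restricted to A is a permutation of A. Let 𝓑 be the set of all cliques B ⊆ A such that φ(B) = B (setwise). Then Fix φ is exactly the submonoid of M(A,I) generated by {w_B : B ∈ 𝓑}. -/
/-- The image in the trace monoid of a letter `a ∈ A`. -/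
def traceOf (A : Type) (I : A → A → Prop) (a : A) : TraceMonoid A I :=
  (traceCon A I).mk' (FreeMonoid.of a)

/-- The submonoid of fixed points of an endomorphism. -/
def fixedSubmonoid {M : Type*} [Monoid M] (φ : M →* M) : Submonoid M where
  carrier := {x | φ x = x}
  mul_mem' := by
    intro a b ha hb
    simp only [Set.mem_setOf_eq] at *
    rw [map_mul, ha, hb]
  one_mem' := map_one φ

/-- A clique of the independence graph: a nonempty set of letters that pairwise
commute (are pairwise independent). -/
def IsClique (A : Type) (I : A → A → Prop) (B : Finset A) : Prop :=
  B.Nonempty ∧ ∀ a ∈ B, ∀ b ∈ B, a ≠ b → I a b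

/-- `w_B`: the product in the trace monoid of all letters of `B`. -/
noncomputable def wB (A : Type) (I : A → A → Prop) (B : Finset A) : TraceMonoid A I :=
  (B.toList.map (traceOf A I)).prod

set_option linter.unusedSectionVars false


section Core
variable {A : Type} [DecidableEq A] {I : A → A → Prop}

/-- The relation on lists induced by the trace congruence. -/
def LRel (I : A → A → Prop) (x y : List A) : Prop :=
  ConGen.Rel (traceRel A I) (FreeMonoid.ofList x) (FreeMonoid.ofList y)

lemma LRel.refl (x : List A) : LRel I x x := ConGen.Rel.refl _

lemma LRel.symm {x y : List A} (h : LRel I x y) : LRel I y x := ConGen.Rel.symm h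

lemma LRel.trans {x y z : List A} (h : LRel I x y) (h' : LRel I y z) : LRel I x z :=
  ConGen.Rel.trans h h'

lemma LRel.append {x y u v : List A} (h : LRel I x y) (h' : LRel I u v) :
    LRel I (x ++ u) (y ++ v) := by
  have := ConGen.Rel.mul h h'
  simpa [LRel, FreeMonoid.ofList_append] using this

lemma LRel.swap {a b : A} (h : I a b) : LRel I [a, b] [b, a] :=
  ConGen.Rel.of _ _ ⟨a, b, h, rfl, rfl⟩

lemma LRel.cons (a : A) {u v : List A} (h : LRel I u v) : LRel I (a :: u) (a :: v) := by
  simpa using (LRel.refl (I := I) [a]).append h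

/-- Projection onto the letters `c`, `d`. -/
def projcd (c d : A) (x : List A) : List A := x.filter (fun e => decide (e = c ∨ e = d))

lemma rel_perm {x y : FreeMonoid A} (h : ConGen.Rel (traceRel A I) x y) :
    x.toList.Perm y.toList := by
  induction h with
  | of x y h =>
    obtain ⟨a, b, _, rfl, rfl⟩ := h
    exact List.Perm.swap b a []
  | refl => exact List.Perm.refl _
  | symm _ ih => exact ih.symm
  | trans _ _ ih1 ih2 => exact ih1.trans ih2
  | mul _ _ ih1 ih2 => exact ih1.append ih2

lemma LRel.perm {x y : List A} (h : LRel I x y) : x.Perm y := rel_perm h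

lemma projcd_cons (c d a : A) (x : List A) :
    projcd c d (a :: x) = if a = c ∨ a = d then a :: projcd c d x else projcd c d x := by
  by_cases h : a = c ∨ a = d <;> simp [projcd, List.filter_cons, h]

lemma projcd_append (c d : A) (x y : List A) :
    projcd c d (x ++ y) = projcd c d x ++ projcd c d y := by
  simp [projcd, List.filter_append]

lemma rel_proj (hsym : Symmetric I) (hirr : Irreflexive I) {x y : FreeMonoid A}
    (h : ConGen.Rel (traceRel A I) x y) (c d : A) (hcd : ¬ I c d) :
    projcd c d x.toList = projcd c d y.toList := by
  induction h with
  | of x y h =>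
    obtain ⟨a, b, hab, rfl, rfl⟩ := h
    have hne : a ≠ b := fun h => hirr a (h ▸ hab)
    have hnot : ¬ ((a = c ∨ a = d) ∧ (b = c ∨ b = d)) := by
      rintro ⟨(rfl | rfl), (rfl | rfl)⟩
      · exact hne rfl
      · exact hcd hab
      · exact hcd (hsym hab)
      · exact hne rfl
    show projcd c d [a, b] = projcd c d [b, a]
    by_cases h1 : a = c ∨ a = d <;> by_cases h2 : b = c ∨ b = d <;>
      simp [projcd, h1, h2] at hnot ⊢
  | refl => rfl
  | symm _ ih => exact ih.symm
  | trans _ _ ih1 ih2 => exact ih1.trans ih2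
  | mul _ _ ih1 ih2 =>
    show projcd c d (_ ++ _) = projcd c d (_ ++ _)
    rw [projcd_append, projcd_append, ih1, ih2]

lemma LRel.proj (hsym : Symmetric I) (hirr : Irreflexive I) {x y : List A}
    (h : LRel I x y) (c d : A) (hcd : ¬ I c d) :
    projcd c d x = projcd c d y := rel_proj hsym hirr h c d hcd

/-- Commuting a letter to the front. -/
lemma lrel_pull {a : A} {p q : List A} (h : ∀ c ∈ p, I c a) :
    LRel I (p ++ a :: q) (a :: (p ++ q)) := by
  induction p with
  | nil => exact LRel.refl _
  | cons c p ih =>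
    have h1 : LRel I (c :: (p ++ a :: q)) (c :: (a :: (p ++ q))) :=
      LRel.cons c (ih fun e he => h e (List.mem_cons_of_mem _ he))
    have h2 : LRel I (c :: a :: (p ++ q)) (a :: c :: (p ++ q)) := by
      simpa using (LRel.swap (h c (List.mem_cons_self))).append (LRel.refl (I := I) (p ++ q))
    exact h1.trans h2

lemma mem_split_first {a : A} {y : List A} (h : a ∈ y) :
    ∃ p q, y = p ++ a :: q ∧ a ∉ p := by
  induction y with
  | nil => simp at h
  | cons b y ih =>
    by_cases hb : a = b
    · exact ⟨[], y, by simp [hb], by simp⟩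
    · obtain ⟨p, q, rfl, hp⟩ := ih (by
        rcases List.mem_cons.mp h with h1 | h1
        · exact absurd h1 hb
        · exact h1)
      exact ⟨b :: p, q, rfl, by simp [List.mem_cons, hb, hp]⟩

/-- Completeness of the projection criterion (projection lemma). -/
lemma lrel_of_perm_proj (hsym : Symmetric I) (hirr : Irreflexive I) :
    ∀ {x y : List A}, x.Perm y →
      (∀ c d, ¬ I c d → projcd c d x = projcd c d y) → LRel I x y := by
  intro x
  induction x with
  | nil =>
    intro y hperm _
    rw [hperm.nil_eq]
    exact LRel.refl _
  | cons a u ih =>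
    intro y hperm hproj
    have hay : a ∈ y := hperm.mem_iff.mp (List.mem_cons_self)
    obtain ⟨p, q, rfl, hap⟩ := mem_split_first hay
    -- every letter of p commutes with a
    have hp : ∀ c ∈ p, I c a := by
      intro c hc
      by_contra hca
      have hne : c ≠ a := fun h => hap (h ▸ hc)
      have hEq := hproj c a hca
      have hL : projcd c a (a :: u) = a :: projcd c a u := by
        rw [projcd_cons, if_pos (Or.inr rfl)]
      have hcp : c ∈ projcd c a p := by
        simp [projcd, hc]
      rw [hL] at hEq
      have : projcd c a (p ++ a :: q) = projcd c a p ++ a :: projcd c a q := by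
        rw [projcd_append, projcd_cons, if_pos (Or.inr rfl)]
      rw [this] at hEq
      rcases hpp : projcd c a p with _ | ⟨e, l⟩
      · rw [hpp] at hcp; simp at hcp
      · rw [hpp] at hEq
        have ha' : a = e := by
          have := congrArg List.head? hEq
          simpa using this
        have : e ∈ p := by
          have : e ∈ projcd c a p := by rw [hpp]; exact List.mem_cons_self
          exact List.mem_of_mem_filter this
        exact hap (ha' ▸ this)
    have hpull : LRel I (p ++ a :: q) (a :: (p ++ q)) := lrel_pull hp
    -- now compare u with p ++ q
    have hperm' : u.Perm (p ++ q) := by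
      have h1 : (a :: u).Perm (a :: (p ++ q)) := hperm.trans hpull.perm
      exact h1.cons_inv
    have hproj' : ∀ c d, ¬ I c d → projcd c d u = projcd c d (p ++ q) := by
      intro c d hcd
      have h1 : projcd c d (a :: u) = projcd c d (a :: (p ++ q)) :=
        (hproj c d hcd).trans (hpull.proj hsym hirr c d hcd)
      rw [projcd_cons, projcd_cons] at h1
      by_cases hA : a = c ∨ a = d
      · rw [if_pos hA, if_pos hA] at h1
        exact List.tail_eq_of_cons_eq h1
      · rwa [if_neg hA, if_neg hA] at h1
    exact (LRel.cons a (ih hperm' hproj')).trans hpull.symm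

theorem lrel_iff (hsym : Symmetric I) (hirr : Irreflexive I) {x y : List A} :
    LRel I x y ↔ x.Perm y ∧ ∀ c d, ¬ I c d → projcd c d x = projcd c d y :=
  ⟨fun h => ⟨h.perm, fun c d hcd => h.proj hsym hirr c d hcd⟩,
   fun ⟨h1, h2⟩ => lrel_of_perm_proj hsym hirr h1 h2⟩

lemma lrel_cons_cancel (hsym : Symmetric I) (hirr : Irreflexive I) {a : A} {u v : List A}
    (h : LRel I (a :: u) (a :: v)) : LRel I u v := by
  rw [lrel_iff hsym hirr] at h ⊢
  obtain ⟨h1, h2⟩ := h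
  refine ⟨h1.cons_inv, fun c d hcd => ?_⟩
  have := h2 c d hcd
  rw [projcd_cons, projcd_cons] at this
  by_cases hA : a = c ∨ a = d
  · rw [if_pos hA, if_pos hA] at this
    exact List.tail_eq_of_cons_eq this
  · rwa [if_neg hA, if_neg hA] at this

lemma lrel_append_cancel (hsym : Symmetric I) (hirr : Irreflexive I) {l u v : List A}
    (h : LRel I (l ++ u) (l ++ v)) : LRel I u v := by
  induction l with
  | nil => simpa using h
  | cons a l ih => exact ih (lrel_cons_cancel hsym hirr (by simpa using h))

end Core

section First
variable {A : Type} [DecidableEq A] {I : A → A → Prop}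

/-- `a` is a first letter of the word `x`. -/
def IsFirstL (I : A → A → Prop) (a : A) (x : List A) : Prop :=
  ∃ p q, x = p ++ a :: q ∧ ∀ c ∈ p, I c a

lemma isFirst_head (a : A) (x : List A) : IsFirstL I a (a :: x) :=
  ⟨[], x, rfl, by simp⟩

lemma isFirst_pull {a : A} {x : List A} (h : IsFirstL I a x) :
    ∃ u, LRel I x (a :: u) ∧ x.length = u.length + 1 := by
  obtain ⟨p, q, rfl, hp⟩ := h
  exact ⟨p ++ q, lrel_pull hp, by simp; omega⟩

lemma isFirst_iff (hsym : Symmetric I) (hirr : Irreflexive I) {a : A} {x : List A} :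
    IsFirstL I a x ↔ a ∈ x ∧ ∀ c, ¬ I c a → (projcd c a x).head? = some a := by
  constructor
  · rintro ⟨p, q, rfl, hp⟩
    refine ⟨by simp, fun c hca => ?_⟩
    have hpnil : projcd c a p = [] := by
      rw [show projcd c a p = List.filter (fun e => decide (e = c ∨ e = a)) p from rfl,
        List.filter_eq_nil_iff]
      intro e he
      simp only [decide_eq_true_eq]
      rintro (rfl | rfl)
      · exact hca (hp _ he)
      · exact hirr _ (hp _ he)
    rw [projcd_append, hpnil, projcd_cons, if_pos (Or.inr rfl)]
    simp
  · rintro ⟨hax, h⟩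
    obtain ⟨p, q, rfl, hap⟩ := mem_split_first hax
    refine ⟨p, q, rfl, fun c hc => ?_⟩
    by_contra hca
    have h1 := h c hca
    rw [projcd_append, projcd_cons, if_pos (Or.inr rfl)] at h1
    have hcp : c ∈ projcd c a p := by simp [projcd, hc]
    rcases hpp : projcd c a p with _ | ⟨e, l⟩
    · rw [hpp] at hcp; simp at hcp
    · rw [hpp] at h1
      simp only [List.cons_append, List.head?_cons, Option.some.injEq] at h1
      have : e ∈ p := List.mem_of_mem_filter (hpp ▸ (show e ∈ e :: l from List.mem_cons_self))
      exact hap (h1 ▸ this)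

lemma isFirst_invariant (hsym : Symmetric I) (hirr : Irreflexive I) {a : A} {x y : List A}
    (h : LRel I x y) : IsFirstL I a x ↔ IsFirstL I a y := by
  rw [isFirst_iff hsym hirr, isFirst_iff hsym hirr]
  constructor <;> rintro ⟨h1, h2⟩
  · exact ⟨h.perm.mem_iff.mp h1, fun c hca => (h.proj hsym hirr c a hca) ▸ h2 c hca⟩
  · exact ⟨h.perm.mem_iff.mpr h1, fun c hca => (h.proj hsym hirr c a hca) ▸ h2 c hca⟩

lemma isFirst_of_cons {a b : A} {w : List A} (hne : b ≠ a) (h : IsFirstL I b (a :: w)) :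
    I a b ∧ IsFirstL I b w := by
  obtain ⟨p, q, hpq, hp⟩ := h
  rcases p with _ | ⟨e, p'⟩
  · simp only [List.nil_append, List.cons.injEq] at hpq
    exact absurd hpq.1.symm hne
  · simp only [List.cons_append, List.cons.injEq] at hpq
    obtain ⟨rfl, hw⟩ := hpq
    refine ⟨hp a (List.mem_cons_self), p', q, hw, fun c hc => hp c (List.mem_cons_of_mem _ hc)⟩

/-- Extract a list of distinct first letters from the front. -/
lemma extract_list (hsym : Symmetric I) (hirr : Irreflexive I) :
    ∀ (l : List A) (x : List A), l.Nodup → (∀ a ∈ l, IsFirstL I a x) →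
      ∃ x', LRel I x (l ++ x') ∧ x.length = l.length + x'.length := by
  intro l
  induction l with
  | nil => exact fun x _ _ => ⟨x, LRel.refl x, by simp⟩
  | cons a l ih =>
    intro x hnd hfirst
    obtain ⟨u, hu, hlen⟩ := isFirst_pull (hfirst a (List.mem_cons_self))
    have hl : ∀ b ∈ l, IsFirstL I b u := by
      intro b hb
      have hba : b ≠ a := fun h => (List.nodup_cons.mp hnd).1 (h ▸ hb)
      have h1 : IsFirstL I b (a :: u) :=
        (isFirst_invariant hsym hirr hu).mp (hfirst b (List.mem_cons_of_mem _ hb))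
      exact (isFirst_of_cons hba h1).2
    obtain ⟨x', hx', hlen'⟩ := ih u (List.nodup_cons.mp hnd).2 hl
    exact ⟨x', hu.trans (LRel.cons a hx'), by simp at hlen' ⊢; omega⟩

end First

section Bridge
variable {A : Type} [DecidableEq A] (I : A → A → Prop)

/-- The image of a list in the trace monoid. -/
def mkT (x : List A) : TraceMonoid A I := (traceCon A I).mk' (FreeMonoid.ofList x)

lemma mkT_append (x y : List A) : mkT I (x ++ y) = mkT I x * mkT I y := by
  unfold mkT
  rw [← map_mul]
  rfl

lemma mkT_eq {x y : List A} : mkT I x = mkT I y ↔ LRel I x y := Con.eq _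

lemma mkT_nil : mkT I [] = (1 : TraceMonoid A I) := map_one _

lemma mkT_cons (a : A) (x : List A) : mkT I (a :: x) = traceOf A I a * mkT I x := by
  rw [show a :: x = [a] ++ x from rfl, mkT_append]
  rfl

lemma mkT_eq_prod (x : List A) : mkT I x = (x.map (traceOf A I)).prod := by
  induction x with
  | nil => simpa using mkT_nil I
  | cons a x ih => rw [mkT_cons, List.map_cons, List.prod_cons, ih]

lemma commute_traceOf {a b : A} (h : I a b) :
    Commute (traceOf A I a) (traceOf A I b) := by
  have h1 : mkT I [a, b] = mkT I [b, a] := (mkT_eq I).mpr (LRel.swap h)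
  have h2 : mkT I [a, b] = traceOf A I a * traceOf A I b := by
    rw [mkT_cons, mkT_cons]
    simp [mkT_nil]
  have h3 : mkT I [b, a] = traceOf A I b * traceOf A I a := by
    rw [mkT_cons, mkT_cons]
    simp [mkT_nil]
  rw [Commute, SemiconjBy, ← h2, ← h3, h1]

end Bridge


/-- If an endomorphism `φ` of `M(A,I)` restricts to a permutation `σ` of the letters,
then its fixed point submonoid is generated by the elements `w_B`, where `B` ranges
over the cliques with `σ(B) = B`. -/
theorem fix_eq_closure_invariant_cliques (A : Type) [Fintype A] [DecidableEq A]
    (I : A → A → Prop) (hsym : Symmetric I) (hirr : Irreflexive I)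
    (φ : Monoid.End (TraceMonoid A I)) (σ : Equiv.Perm A)
    (hσ : ∀ a : A, φ (traceOf A I a) = traceOf A I (σ a)) :
    fixedSubmonoid (φ : TraceMonoid A I →* TraceMonoid A I) =
      Submonoid.closure
        {w | ∃ B : Finset A, IsClique A I B ∧ B.image σ = B ∧ w = wB A I B} := by
  classical
  set S : Set (TraceMonoid A I) :=
    {w | ∃ B : Finset A, IsClique A I B ∧ B.image σ = B ∧ w = wB A I B} with hS
  have phi_mk : ∀ x : List A, φ (mkT I x) = mkT I (x.map σ) := by
    intro x
    induction x with
    | nil => rw [mkT_nil, List.map_nil, mkT_nil]; exact map_one φ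
    | cons a x ih => rw [mkT_cons, map_mul, hσ, ih, List.map_cons, mkT_cons]
  have sigma_pres : ∀ a b : A, I a b → I (σ a) (σ b) := by
    intro a b hab
    have hne : a ≠ b := fun h => hirr b (h ▸ hab)
    have h1 : mkT I [a, b] = mkT I [b, a] := (mkT_eq I).mpr (LRel.swap hab)
    have h2 : mkT I [σ a, σ b] = mkT I [σ b, σ a] := by
      have := congrArg φ h1
      rwa [phi_mk, phi_mk] at this
    by_contra hI
    have h3 : LRel I [σ a, σ b] [σ b, σ a] := (mkT_eq I).mp h2
    have h4 := h3.proj hsym hirr (σ a) (σ b) hI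
    simp [projcd_cons, projcd] at h4
    exact hne h4.1
  have wB_fixed : ∀ B : Finset A, (∀ a ∈ B, ∀ b ∈ B, a ≠ b → I a b) →
      B.image σ = B → φ (wB A I B) = wB A I B := by
    intro B hcl hB
    have hmem : ∀ b ∈ B.toList.map σ, b ∈ B := by
      intro b hb
      obtain ⟨c, hc, rfl⟩ := List.mem_map.mp hb
      rw [← hB]
      exact Finset.mem_image_of_mem σ (Finset.mem_toList.mp hc)
    have hperm : (B.toList.map σ).Perm B.toList := by
      rw [← Multiset.coe_eq_coe]
      have h1 : (↑(B.toList.map σ) : Multiset A) = B.val.map σ := by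
        rw [← Multiset.map_coe, Finset.coe_toList]
      have h2 : (B.image σ).val = B.val.map σ := by
        rw [Finset.image_val, Multiset.dedup_eq_self.mpr (B.nodup.map σ.injective)]
      rw [h1, ← h2, hB, Finset.coe_toList]
    have hnd : (B.toList.map σ).Nodup := B.nodup_toList.map σ.injective
    have hpair : (B.toList.map σ).Pairwise
        (fun a b => Commute (traceOf A I a) (traceOf A I b)) := by
      refine hnd.imp_of_mem ?_
      intro a b ha hb hab
      exact commute_traceOf I (hcl a (hmem a ha) b (hmem b hb) hab)
    have h1 : φ (wB A I B) = ((B.toList.map σ).map (traceOf A I)).prod := by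
      rw [wB, map_list_prod]
      simp only [List.map_map]
      congr 1
      ext a
      simp [Function.comp, hσ]
    rw [h1, wB]
    exact List.Perm.prod_eq' (hperm.map _) (List.pairwise_map.mpr hpair)
  apply le_antisymm
  · -- Fix φ ⊆ closure
    intro t ht
    have key : ∀ n (x : List A), x.length ≤ n → φ (mkT I x) = mkT I x →
        mkT I x ∈ Submonoid.closure S := by
      intro n
      induction n with
      | zero =>
        intro x hx _
        rw [List.length_eq_zero_iff.mp (Nat.le_zero.mp hx), mkT_nil]
        exact one_mem _
      | succ n ih =>
        intro x hx hfix
        rcases x with _ | ⟨a, xs⟩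
        · rw [mkT_nil]; exact one_mem _
        have hfix' : LRel I ((a :: xs).map σ) (a :: xs) :=
          (mkT_eq I).mp (by rw [← phi_mk]; exact hfix)
        set B : Finset A := Finset.univ.filter (fun b => IsFirstL I b (a :: xs)) with hBdef
        have hmemB : ∀ b, b ∈ B ↔ IsFirstL I b (a :: xs) := by
          intro b; simp [hBdef]
        have haB : a ∈ B := (hmemB a).mpr (isFirst_head a xs)
        have hclique : ∀ b ∈ B, ∀ c ∈ B, b ≠ c → I b c := by
          intro b hb c hc hbc
          obtain ⟨u, hu, _⟩ := isFirst_pull ((hmemB b).mp hb)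
          have hc' : IsFirstL I c (b :: u) :=
            (isFirst_invariant hsym hirr hu).mp ((hmemB c).mp hc)
          exact (isFirst_of_cons (Ne.symm hbc) hc').1
        have hsig : B.image σ = B := by
          apply Finset.eq_of_subset_of_card_le
          · intro b hb
            obtain ⟨b0, hb0, rfl⟩ := Finset.mem_image.mp hb
            obtain ⟨p, q, hpq, hp⟩ := (hmemB b0).mp hb0
            have hf : IsFirstL I (σ b0) ((a :: xs).map σ) := by
              refine ⟨p.map σ, q.map σ, by rw [hpq]; simp, ?_⟩
              intro c hc
              obtain ⟨c0, hc0, rfl⟩ := List.mem_map.mp hc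
              exact sigma_pres _ _ (hp c0 hc0)
            exact (hmemB _).mpr ((isFirst_invariant hsym hirr hfix').mp hf)
          · rw [Finset.card_image_of_injective _ σ.injective]
        obtain ⟨x', hx', hlen⟩ := extract_list hsym hirr B.toList (a :: xs)
          B.nodup_toList (fun b hb => (hmemB b).mp (Finset.mem_toList.mp hb))
        have hwBmk : mkT I B.toList = wB A I B := by
          rw [wB, mkT_eq_prod]
        have hsplit : mkT I (a :: xs) = wB A I B * mkT I x' := by
          rw [(mkT_eq I).mpr hx', mkT_append, hwBmk]
        have hwB : φ (wB A I B) = wB A I B := wB_fixed B hclique hsig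
        have hfix'' : φ (mkT I x') = mkT I x' := by
          have h2 : mkT I (B.toList ++ x'.map σ) = mkT I (B.toList ++ x') := by
            rw [mkT_append, mkT_append, hwBmk, ← phi_mk]
            calc wB A I B * φ (mkT I x') = φ (wB A I B * mkT I x') := by rw [map_mul, hwB]
              _ = φ (mkT I (a :: xs)) := by rw [← hsplit]
              _ = mkT I (a :: xs) := hfix
              _ = wB A I B * mkT I x' := hsplit
          rw [phi_mk]
          exact (mkT_eq I).mpr (lrel_append_cancel hsym hirr ((mkT_eq I).mp h2))
        have hcard : 1 ≤ B.toList.length := by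
          rw [Finset.length_toList]
          exact Finset.card_pos.mpr ⟨a, haB⟩
        have hmem' : mkT I x' ∈ Submonoid.closure S := by
          refine ih x' ?_ hfix''
          simp only [List.length_cons] at hx hlen
          omega
        have hwmem : wB A I B ∈ S := ⟨B, ⟨⟨a, haB⟩, hclique⟩, hsig, rfl⟩
        rw [hsplit]
        exact mul_mem (Submonoid.subset_closure hwmem) hmem'
    obtain ⟨w, rfl⟩ := Con.mk'_surjective t
    exact key w.toList.length w.toList le_rfl ht
  · -- closure ⊆ Fix φ
    rw [Submonoid.closure_le]
    rintro w ⟨B, ⟨hne, hcl⟩, hsig, rfl⟩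
    exact wB_fixed B hcl hsig
end

section
/- Let (A,I) be a finite independence alphabet and let φ be an endomorphism of the trace monoid M(A,I) such that φ(a) ≠ 1 for every letter a ∈ A. Let A₀ = A ∩ Per φ. Then φ(A₀) = A₀. -/
/-- The set of letters which are periodic points of the endomorphism `φ`. -/
def perLetters (A : Type) (I : A → A → Prop) (φ : Monoid.End (TraceMonoid A I)) : Set A :=
  {a : A | ∃ n : ℕ, 1 ≤ n ∧ (φ ^ n) (traceOf A I a) = traceOf A I a}

section Aux
variable (A : Type) (I : A → A → Prop)

def lenFree : FreeMonoid A →* Multiplicative ℕ :=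
  FreeMonoid.lift (fun _ => Multiplicative.ofAdd 1)

def lenHom : TraceMonoid A I →* Multiplicative ℕ :=
  Con.lift _ (lenFree A) (by
    apply Con.conGen_le.mpr
    rintro x y ⟨a, b, _, rfl, rfl⟩
    simp [Con.ker_rel, map_mul, mul_comm])

def ell (x : TraceMonoid A I) : ℕ := Multiplicative.toAdd (lenHom A I x)

lemma ell_mul (x y : TraceMonoid A I) : ell A I (x*y) = ell A I x + ell A I y := by
  simp [ell, map_mul]

lemma ell_traceOf (a : A) : ell A I (traceOf A I a) = 1 := by
  simp [ell, lenHom, traceOf, Con.lift_mk', lenFree]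

lemma ell_mk (w : FreeMonoid A) :
    ell A I ((traceCon A I).mk' w) = w.length := by
  induction w using FreeMonoid.recOn with
  | one => simp [ell]
  | of_mul a t iht =>
    rw [map_mul, ell_mul, iht]
    show ell A I (traceOf A I a) + _ = _
    simp [ell_traceOf]

lemma eq_one_of_ell (x : TraceMonoid A I) (h : ell A I x = 0) : x = 1 := by
  obtain ⟨w, rfl⟩ := Con.mk'_surjective x
  rw [ell_mk] at h
  have : w = 1 := by
    cases w using FreeMonoid.recOn with
    | one => rfl
    | of_mul a t _ => simp [FreeMonoid.length] at h
  simp [this]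

lemma eq_traceOf_of_ell (x : TraceMonoid A I) (h : ell A I x = 1) :
    ∃ a, x = traceOf A I a := by
  obtain ⟨w, rfl⟩ := Con.mk'_surjective x
  rw [ell_mk] at h
  obtain ⟨a, ha⟩ : ∃ a, w = FreeMonoid.of a := by
    rcases w with _ | ⟨a, t⟩
    · change List.length ([] : List A) = 1 at h; simp at h
    · rcases t with _ | ⟨b, t⟩
      · exact ⟨a, rfl⟩
      · change List.length (a :: b :: t) = 1 at h; simp at h
  exact ⟨a, by rw [ha]; rfl⟩

end Aux

section Main
variable (A : Type) (I : A → A → Prop)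

lemma ell_one : ell A I (1 : TraceMonoid A I) = 0 := by
  simp [ell]

lemma ell_le_apply (φ : Monoid.End (TraceMonoid A I))
    (hne : ∀ a : A, φ (traceOf A I a) ≠ 1) (x : TraceMonoid A I) :
    ell A I x ≤ ell A I (φ x) := by
  obtain ⟨w, rfl⟩ := Con.mk'_surjective x
  induction w using FreeMonoid.recOn with
  | one =>
    simp [ell_one]
  | of_mul a t iht =>
    have hsplit : (traceCon A I).mk' (FreeMonoid.of a * t)
        = traceOf A I a * (traceCon A I).mk' t := by
      rw [map_mul]; rfl
    have h1 : 1 ≤ ell A I (φ (traceOf A I a)) := by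
      by_contra h
      exact hne a (eq_one_of_ell A I _ (by omega))
    rw [hsplit, map_mul, ell_mul, ell_mul, ell_traceOf]
    omega

lemma ell_le_pow (φ : Monoid.End (TraceMonoid A I))
    (hne : ∀ a : A, φ (traceOf A I a) ≠ 1) (m : ℕ) (x : TraceMonoid A I) :
    ell A I x ≤ ell A I ((φ ^ m) x) := by
  induction m with
  | zero => simp
  | succ k ih =>
    have hk : (φ ^ (k+1)) x = φ ((φ ^ k) x) := by rw [pow_succ']; rfl
    rw [hk]
    exact le_trans ih (ell_le_apply A I φ hne _)

lemma pow_apply_comm (φ : Monoid.End (TraceMonoid A I)) (m k : ℕ) (x : TraceMonoid A I) :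
    (φ ^ m) ((φ ^ k) x) = (φ ^ k) ((φ ^ m) x) := by
  have h1 : (φ ^ (m + k)) x = (φ ^ m) ((φ ^ k) x) := by rw [pow_add]; rfl
  have h2 : (φ ^ (k + m)) x = (φ ^ k) ((φ ^ m) x) := by rw [pow_add]; rfl
  rw [← h1, ← h2, Nat.add_comm]

lemma pow_succ_apply (φ : Monoid.End (TraceMonoid A I)) (k : ℕ) (x : TraceMonoid A I) :
    (φ ^ (k+1)) x = (φ ^ k) (φ x) := by rw [pow_succ]; rfl

lemma pow_succ_apply' (φ : Monoid.End (TraceMonoid A I)) (k : ℕ) (x : TraceMonoid A I) :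
    (φ ^ (k+1)) x = φ ((φ ^ k) x) := by rw [pow_succ']; rfl

end Main

/-- If `φ(a) ≠ 1` for every letter `a`, and `A₀ = A ∩ Per φ`, then `φ(A₀) = A₀`. -/
theorem perLetters_image_eq (A : Type) [Fintype A] (I : A → A → Prop)
    (hsym : Symmetric I) (hirr : Irreflexive I)
    (φ : Monoid.End (TraceMonoid A I))
    (hne : ∀ a : A, φ (traceOf A I a) ≠ 1) :
    ⇑φ '' (traceOf A I '' perLetters A I φ) = traceOf A I '' perLetters A I φ := by
  apply Set.Subset.antisymm
  · rintro _ ⟨_, ⟨a, ⟨n, hn1, hn⟩, rfl⟩, rfl⟩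
    have hn' : n - 1 + 1 = n := Nat.succ_pred_eq_of_pos hn1
    have key : (φ ^ (n-1)) (φ (traceOf A I a)) = traceOf A I a := by
      rw [← pow_succ_apply, hn', hn]
    have h1 : 1 ≤ ell A I (φ (traceOf A I a)) := by
      have := ell_le_apply A I φ hne (traceOf A I a)
      rwa [ell_traceOf] at this
    have h2 : ell A I (φ (traceOf A I a)) ≤ 1 := by
      have := ell_le_pow A I φ hne (n-1) (φ (traceOf A I a))
      rwa [key, ell_traceOf] at this
    obtain ⟨b, hb⟩ := eq_traceOf_of_ell A I _ (le_antisymm h2 h1)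
    refine ⟨b, ⟨n, hn1, ?_⟩, hb.symm⟩
    rw [← hb, ← pow_succ_apply, pow_succ_apply', hn]
  · rintro _ ⟨a, ⟨n, hn1, hn⟩, rfl⟩
    have hn' : n - 1 + 1 = n := Nat.succ_pred_eq_of_pos hn1
    set y := (φ ^ (n-1)) (traceOf A I a) with hy_def
    have hy : φ y = traceOf A I a := by
      rw [hy_def, ← pow_succ_apply', hn', hn]
    have h2 : ell A I y ≤ 1 := by
      have := ell_le_apply A I φ hne y
      rwa [hy, ell_traceOf] at this
    have h1 : 1 ≤ ell A I y := by
      rcases Nat.eq_zero_or_pos (ell A I y) with h | h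
      · exfalso
        have : y = 1 := eq_one_of_ell A I y h
        have h1' : traceOf A I a = 1 := by rw [← hy, this, map_one]
        have := ell_traceOf A I a
        rw [h1', ell_one] at this
        omega
      · exact h
    obtain ⟨c, hc⟩ := eq_traceOf_of_ell A I y (le_antisymm h2 h1)
    refine ⟨traceOf A I c, ⟨c, ⟨n, hn1, ?_⟩, rfl⟩, by rw [← hc]; exact hy⟩
    rw [← hc, hy_def, pow_apply_comm, hn]
end

section
/- Let (A,I) be a finite independence alphabet and let φ be an endomorphism of the trace monoid M(A,I) such that φ(a) ≠ 1 for every letter a ∈ A. Let A₀ = A ∩ Per φ and let M′ be the submonoid of M(A,I) generated by A₀ (so φ restricts to an endomorphism φ′ of M′). Then Fix φ = Fix φ′; in particular, every fixed point of φ lies in the submonoid generated by A₀. -/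
namespace TraceAux

variable (A : Type) (I : A → A → Prop)

/-- The multiset-of-letters homomorphism. -/
def mset : TraceMonoid A I →* Multiplicative (Multiset A) :=
  Con.lift _ (FreeMonoid.lift fun a => Multiplicative.ofAdd ({a} : Multiset A)) <| by
    refine Con.conGen_le.mpr fun x y hxy => ?_
    obtain ⟨a, b, _, rfl, rfl⟩ := hxy
    show _ = _
    simp only [map_mul, FreeMonoid.lift_eval_of]
    exact mul_comm _ _

lemma mset_mk_of (a : A) :
    mset A I ((traceCon A I).mk' (FreeMonoid.of a)) = Multiplicative.ofAdd ({a} : Multiset A) := by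
  simp [mset]
  exact FreeMonoid.lift_eval_of _ _

lemma mset_of (a : A) : mset A I (traceOf A I a) = Multiplicative.ofAdd ({a} : Multiset A) :=
  mset_mk_of A I a

lemma mk_ofList (l : List A) :
    (traceCon A I).mk' (FreeMonoid.ofList l) = (l.map (traceOf A I)).prod := by
  induction l with
  | nil => simp
  | cons a l ih =>
    rw [show FreeMonoid.ofList (a :: l) = FreeMonoid.of a * FreeMonoid.ofList l from rfl,
      map_mul, ih, List.map_cons, List.prod_cons]
    rfl

lemma mset_mk (l : List A) :
    mset A I ((traceCon A I).mk' (FreeMonoid.ofList l)) =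
      Multiplicative.ofAdd (↑l : Multiset A) := by
  induction l with
  | nil => simp [mk_ofList]
  | cons a l ih =>
    rw [show FreeMonoid.ofList (a :: l) = FreeMonoid.of a * FreeMonoid.ofList l from rfl,
      map_mul, map_mul, ih, mset_mk_of]
    rw [← ofAdd_add, ← Multiset.cons_coe, ← Multiset.singleton_add]

lemma eq_one_of_mset (y : TraceMonoid A I) (h : mset A I y = 1) : y = 1 := by
  induction y using Con.induction_on with
  | H w =>
    have hw : (w : TraceMonoid A I) = (traceCon A I).mk' (FreeMonoid.ofList w.toList) := by
      rw [FreeMonoid.ofList_toList]; rfl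
    rw [hw, mset_mk] at h
    have : (↑w.toList : Multiset A) = 0 := by
      simpa using h
    have : w.toList = [] := by rwa [Multiset.coe_eq_zero] at this
    rw [hw, this]
    simp [mk_ofList]

lemma eq_traceOf_of_mset (y : TraceMonoid A I) (b : A)
    (h : mset A I y = Multiplicative.ofAdd ({b} : Multiset A)) : y = traceOf A I b := by
  induction y using Con.induction_on with
  | H w =>
    have hw : (w : TraceMonoid A I) = (traceCon A I).mk' (FreeMonoid.ofList w.toList) := by
      rw [FreeMonoid.ofList_toList]; rfl
    rw [hw, mset_mk] at h
    have : (↑w.toList : Multiset A) = ({b} : Multiset A) := by simpa using h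
    have : w.toList = [b] := by
      rwa [Multiset.coe_eq_singleton] at this
    rw [hw, this]
    rfl

lemma length_le_sum {α : Type*} (g : α → ℕ) (h : ∀ a, 1 ≤ g a) :
    ∀ l : List α, l.length ≤ (l.map g).sum := by
  intro l; induction l with
  | nil => simp
  | cons a l ih =>
    simp only [List.length_cons, List.map_cons, List.sum_cons]
    have := h a
    omega

lemma forall_eq_one {α : Type*} (g : α → ℕ) (h1 : ∀ a, 1 ≤ g a) :
    ∀ l : List α, (l.map g).sum = l.length → ∀ a ∈ l, g a = 1 := by
  intro l; induction l with
  | nil => simp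
  | cons a l ih =>
    intro hsum b hb
    simp only [List.map_cons, List.sum_cons, List.length_cons] at hsum
    have h2 := length_le_sum g h1 l
    have h3 := h1 a
    have ha1 : g a = 1 := by omega
    have hl : (l.map g).sum = l.length := by omega
    rcases List.mem_cons.mp hb with rfl | hb
    · exact ha1
    · exact ih hl b hb

lemma sum_singletons {α β : Type*} (f : α → β) :
    ∀ l : List α, (l.map (fun a => ({f a} : Multiset β))).sum = ↑(l.map f) := by
  intro l; induction l with
  | nil => simp
  | cons a l ih => simp [ih, ← Multiset.cons_coe, ← Multiset.singleton_add]

lemma prod_ofAdd {α : Type*} {M : Type*} [AddMonoid M] (g : α → M) :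
    ∀ l : List α, (l.map (fun a => Multiplicative.ofAdd (g a))).prod =
      Multiplicative.ofAdd ((l.map g).sum) := by
  intro l; induction l with
  | nil => simp
  | cons a l ih => simp [ih, ofAdd_add]

end TraceAux

/-- If `φ(a) ≠ 1` for every letter `a`, and `A₀ = A ∩ Per φ`, then the fixed points of
`φ` are exactly the fixed points lying in the submonoid `M′` generated by `A₀`
(i.e. `Fix φ = Fix φ′` for the restriction `φ′` of `φ` to `M′`); in particular every
fixed point of `φ` lies in `M′`. -/
theorem fix_eq_fix_restriction (A : Type) [Fintype A] (I : A → A → Prop)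
    (hsym : Symmetric I) (hirr : Irreflexive I)
    (φ : Monoid.End (TraceMonoid A I))
    (hne : ∀ a : A, φ (traceOf A I a) ≠ 1) :
    {x : TraceMonoid A I | φ x = x} =
      {x : TraceMonoid A I |
        x ∈ Submonoid.closure (traceOf A I '' perLetters A I φ) ∧ φ x = x} := by
  classical
  ext x
  simp only [Set.mem_setOf_eq, and_iff_left_iff_imp, iff_def]
  constructor
  · intro hx
    refine ⟨?_, hx⟩
    -- write x as a word
    obtain ⟨w, rfl⟩ := Con.mk'_surjective x
    obtain ⟨l, hw⟩ : ∃ l : List A, (traceCon A I).mk' w =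
        (l.map (traceOf A I)).prod :=
      ⟨w.toList, by rw [← TraceAux.mk_ofList, FreeMonoid.ofList_toList]⟩
    rw [hw] at hx ⊢
    -- the per-letter multiset
    set g : A → Multiset A := fun a => Multiplicative.toAdd (TraceAux.mset A I (φ (traceOf A I a)))
      with hg
    have hg1 : ∀ a, 1 ≤ (g a).card := by
      intro a
      rcases Nat.eq_zero_or_pos (g a).card with h | h
      · exfalso
        apply hne a
        apply TraceAux.eq_one_of_mset
        have : g a = 0 := Multiset.card_eq_zero.mp h
        rw [hg] at this
        simpa using congrArg Multiplicative.ofAdd this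
      · exact h
    -- mset of both sides of the fixed-point equation
    have hmap : TraceAux.mset A I ((l.map (traceOf A I)).prod) =
        Multiplicative.ofAdd (↑l : Multiset A) := by
      rw [← TraceAux.mk_ofList, TraceAux.mset_mk]
    have hφprod : φ ((l.map (traceOf A I)).prod) =
        (l.map (fun a => φ (traceOf A I a))).prod := by
      rw [map_list_prod]; rw [List.map_map]; rfl
    have hmsum : (l.map g).sum = (↑l : Multiset A) := by
      have h1 := congrArg (TraceAux.mset A I) hx
      rw [hφprod, hmap, map_list_prod, List.map_map] at h1
      have h2 : (l.map (fun a => Multiplicative.ofAdd (g a))).prod =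
          Multiplicative.ofAdd (↑l : Multiset A) := by
        rw [← h1]; rfl
      rw [TraceAux.prod_ofAdd] at h2
      exact Multiplicative.ofAdd.injective h2
    have hcards : (l.map (fun a => (g a).card)).sum = l.length := by
      have := congrArg Multiset.card hmsum
      rw [Multiset.coe_card] at this
      have key : ∀ ms : List (Multiset A), (ms.map Multiset.card).sum = Multiset.card ms.sum := by
        intro ms; induction ms with
        | nil => simp
        | cons m ms ih => simp [ih]
      rw [← this, ← key, List.map_map]
      rfl
    have hone : ∀ a ∈ l, (g a).card = 1 :=
      TraceAux.forall_eq_one _ hg1 l hcards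
    -- the induced letter-to-letter map
    set f : A → A := fun a =>
      if h : ∃ b, g a = {b} then h.choose else a with hf
    have hfa : ∀ a ∈ l, g a = {f a} := by
      intro a ha
      obtain ⟨b, hb⟩ := Multiset.card_eq_one.mp (hone a ha)
      rw [hf]
      have h : ∃ b, g a = {b} := ⟨b, hb⟩
      simp only [h, dif_pos]
      exact h.choose_spec
    have hφf : ∀ a ∈ l, φ (traceOf A I a) = traceOf A I (f a) := by
      intro a ha
      apply TraceAux.eq_traceOf_of_mset
      have := hfa a ha
      rw [hg] at this
      have := congrArg Multiplicative.ofAdd this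
      simpa using this
    -- the multiset of letters is preserved by f
    have hperm : (↑(l.map f) : Multiset A) = (↑l : Multiset A) := by
      rw [← TraceAux.sum_singletons f l, ← hmsum]
      congr 1
      exact List.map_congr_left fun a ha => (hfa a ha).symm
    have hpl : List.Perm (l.map f) l := Multiset.coe_eq_coe.mp hperm
    -- f maps letters of l to letters of l
    have hfl : ∀ a ∈ l, f a ∈ l := fun a ha =>
      hpl.mem_iff.mp (List.mem_map_of_mem (f := f) ha)
    -- iterates of φ on letters of l
    have hiter : ∀ (k : ℕ) (a : A), a ∈ l →
        f^[k] a ∈ l ∧ (φ ^ k) (traceOf A I a) = traceOf A I (f^[k] a) := by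
      intro k
      induction k with
      | zero => intro a ha; exact ⟨ha, by simp⟩
      | succ k ih =>
        intro a ha
        have h2 := ih (f a) (hfl a ha)
        refine ⟨by rw [Function.iterate_succ_apply]; exact h2.1, ?_⟩
        rw [Function.iterate_succ_apply, pow_succ]
        show (φ ^ k) (φ (traceOf A I a)) = _
        rw [hφf a ha]
        exact h2.2
    -- every letter of l is periodic
    have hper : ∀ a ∈ l, a ∈ perLetters A I φ := by
      intro a ha
      let T := {b : A // b ∈ l.toFinset}
      let f' : T → T := fun b =>
        ⟨f b, List.mem_toFinset.mpr (hfl b (List.mem_toFinset.mp b.2))⟩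
      have hsurj : Function.Surjective f' := by
        rintro ⟨b, hb⟩
        have hb' : b ∈ l := List.mem_toFinset.mp hb
        obtain ⟨c, hc, hcb⟩ := List.mem_map.mp (hpl.mem_iff.mpr hb')
        exact ⟨⟨c, List.mem_toFinset.mpr hc⟩, Subtype.ext hcb⟩
      have hbij : Function.Bijective f' :=
        ⟨Finite.injective_iff_surjective.mpr hsurj, hsurj⟩
      let e : Equiv.Perm T := Equiv.ofBijective f' hbij
      have hcoe : ∀ (k : ℕ) (b : T), ((e ^ k) b : A) = f^[k] (b : A) := by
        intro k
        induction k with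
        | zero => intro b; simp
        | succ k ih =>
          intro b
          rw [pow_succ, Function.iterate_succ_apply, Equiv.Perm.mul_apply]
          have : ((e b : T) : A) = f (b : A) := rfl
          rw [← this]
          exact ih (e b)
      set n := orderOf e with hn
      have hnpos : 1 ≤ n := orderOf_pos e
      have hpow : e ^ n = 1 := pow_orderOf_eq_one e
      have hfix : f^[n] a = a := by
        have := hcoe n ⟨a, List.mem_toFinset.mpr ha⟩
        rw [hpow] at this
        simpa using this.symm
      exact ⟨n, hnpos, by rw [(hiter n a ha).2, hfix]⟩
    -- conclude membership in the closure
    refine Submonoid.list_prod_mem _ ?_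
    intro y hy
    obtain ⟨a, ha, rfl⟩ := List.mem_map.mp hy
    exact Submonoid.subset_closure ⟨a, hper a ha, rfl⟩
  · intro h
    exact h.2
end

section
/- Let (A,I) be a finite independence alphabet and let φ be an endomorphism of the trace monoid M(A,I). Let A₁ = {a ∈ A : φ(a) = 1}, A₂ = A \ A₁, let M″ be the submonoid of M(A,I) generated by A₂, let π be the projection endomorphism of M(A,I) determined by π(a) = a for a ∈ A₂ and π(a) = 1 for a ∈ A₁, and let φ″ : M″ → M″ be the endomorphism sending x to π(φ(x)). Then Fix φ = φ(Fix φ″), the image under φ of the fixed point set of φ″. -/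
/-- Induction on trace monoid elements via generators. -/
lemma trace_induction (A : Type) (I : A → A → Prop) {C : TraceMonoid A I → Prop}
    (x : TraceMonoid A I) (h1 : C 1) (hmul : ∀ a y, C y → C (traceOf A I a * y)) : C x := by
  induction x using Con.induction_on with
  | H w =>
    induction w using FreeMonoid.recOn with
    | one => exact h1
    | of_mul a w ih =>
      have : ((FreeMonoid.of a * w : FreeMonoid A) : TraceMonoid A I)
          = traceOf A I a * (w : TraceMonoid A I) := rfl
      rw [this]
      exact hmul a _ ih

/-- Let `A₁ = {a ∈ A : φ(a) = 1}`, `A₂ = A \ A₁`, let `M″` be the submonoid generated by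
`A₂`, let `π` be the projection endomorphism fixing the letters of `A₂` and killing those
of `A₁`, and let `φ″ : M″ → M″, x ↦ π(φ(x))`. Then `Fix φ = φ(Fix φ″)`. -/
theorem fix_eq_image_fix (A : Type) [Fintype A] (I : A → A → Prop)
    (hsym : Symmetric I) (hirr : Irreflexive I)
    (φ π : Monoid.End (TraceMonoid A I))
    (hπ : ∀ a : A,
      (φ (traceOf A I a) = 1 → π (traceOf A I a) = 1) ∧
      (φ (traceOf A I a) ≠ 1 → π (traceOf A I a) = traceOf A I a)) :
    {x : TraceMonoid A I | φ x = x} =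
      ⇑φ '' {x : TraceMonoid A I |
        x ∈ Submonoid.closure (traceOf A I '' {a : A | φ (traceOf A I a) ≠ 1}) ∧
        π (φ x) = x} := by
  -- Key identity: φ ∘ π = φ.
  have key : ∀ x : TraceMonoid A I, φ (π x) = φ x := by
    intro x
    induction x using trace_induction with
    | h1 => simp
    | hmul a y ih =>
      rw [map_mul, map_mul, map_mul, ih]
      congr 1
      by_cases h : φ (traceOf A I a) = 1
      · rw [(hπ a).1 h, map_one, h]
      · rw [(hπ a).2 h]
  -- π maps into the submonoid generated by the letters not killed by φ.
  have mem : ∀ x : TraceMonoid A I,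
      π x ∈ Submonoid.closure (traceOf A I '' {a : A | φ (traceOf A I a) ≠ 1}) := by
    intro x
    induction x using trace_induction with
    | h1 => simpa using one_mem _
    | hmul a y ih =>
      rw [map_mul]
      refine mul_mem ?_ ih
      by_cases h : φ (traceOf A I a) = 1
      · rw [(hπ a).1 h]; exact one_mem _
      · rw [(hπ a).2 h]
        exact Submonoid.subset_closure ⟨a, h, rfl⟩
  ext x
  constructor
  · intro hx
    refine ⟨π x, ⟨mem x, ?_⟩, by rw [key, hx]⟩
    rw [key, hx]
  · rintro ⟨y, ⟨-, hy⟩, rfl⟩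
    show φ (φ y) = φ y
    rw [← key (φ y), hy]
end

section
/- Let (A,I) be a finite independence alphabet and let M(A,I) be the trace monoid equipped with the Foata normal form metric d. Then for all u,v,w ∈ M(A,I), d(uv,uw) ≤ d(v,w); that is, left multiplication by any fixed element is a contraction of (M(A,I),d). -/
/-- The product `w_{B₁} ⋯ w_{B_k}` associated with a list of cliques. -/
noncomputable def wProd (A : Type) (I : A → A → Prop) (L : List (Finset A)) :
    TraceMonoid A I :=
  (L.map (wB A I)).prod

/-- A list `[B₁, …, B_k]` is a Foata chain if each `B_i` is a clique and, for every
`i ≥ 2` and every `a ∈ B_i`, there is some `b ∈ B_{i-1}` with `(a,b) ∉ I`. -/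
def IsFoataChain (A : Type) (I : A → A → Prop) (L : List (Finset A)) : Prop :=
  (∀ B ∈ L, IsClique A I B) ∧
    ∀ i : ℕ, (hi : i + 1 < L.length) →
      ∀ a ∈ L[i + 1], ∃ b ∈ L[i], ¬ I a b

/-- `[B₁, …, B_k]` is the Foata normal form of `u` if it is a Foata chain whose
product is `u`. (Such a list exists and is unique for every `u`.) -/
def IsFNF (A : Type) (I : A → A → Prop) (L : List (Finset A)) (u : TraceMonoid A I) :
    Prop :=
  IsFoataChain A I L ∧ u = wProd A I L

/-- For `u ≠ v`, `rNat u v` is the largest `k` such that the Foata normal forms of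
`u` and `v` have the same first `k` components. -/
noncomputable def rNat (A : Type) (I : A → A → Prop) (u v : TraceMonoid A I) : ℕ :=
  sSup {k : ℕ | ∃ P Lu Lv : List (Finset A), P.length = k ∧
    IsFNF A I (P ++ Lu) u ∧ IsFNF A I (P ++ Lv) v}

open Classical

/-- `r(u,v) ∈ ℕ ∪ {∞}`: the length of the longest common prefix of the Foata normal
forms of `u` and `v`, with `r(u,u) = ∞`. -/
noncomputable def rE (A : Type) (I : A → A → Prop) (u v : TraceMonoid A I) : ℕ∞ :=
  if u = v then ⊤ else (rNat A I u v : ℕ∞)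

/-- The Foata normal form metric: `d(u,v) = 2^{-r(u,v)}`, with `2^{-∞} = 0`. -/
noncomputable def dFNF (A : Type) (I : A → A → Prop) (u v : TraceMonoid A I) : ℝ :=
  if u = v then 0 else (2 : ℝ) ^ (-(rNat A I u v : ℤ))

/-- The content of a trace: the set of letters occurring in (any representative of) it. -/
def content (A : Type) (I : A → A → Prop) (u : TraceMonoid A I) : Set A :=
  {a : A | ∃ w : FreeMonoid A, (traceCon A I).mk' w = u ∧ a ∈ FreeMonoid.toList w}

namespace FoataAux

open List

variable {A : Type} (I : A → A → Prop)

/-- The relation between consecutive cliques in a Foata chain. -/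
def Rdep (I : A → A → Prop) (X Y : Finset A) : Prop := ∀ x ∈ Y, ∃ b ∈ X, ¬ I x b

/-- A more convenient restatement of `IsFoataChain` via `List.Chain'`. -/
def FChain (I : A → A → Prop) (L : List (Finset A)) : Prop :=
  (∀ B ∈ L, IsClique A I B) ∧ List.IsChain (Rdep I) L

lemma isFoataChain_iff (L : List (Finset A)) :
    IsFoataChain A I L ↔ FChain I L := by
  unfold IsFoataChain FChain
  refine and_congr_right fun _ => ?_
  rw [List.isChain_iff_getElem]
  constructor
  · intro h i hi
    intro a ha
    exact h i (by omega) a ha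
  · intro h i hi a ha
    have := h i (by omega)
    exact this a ha

/-- Insertion of a letter into a (reversed) Foata chain. -/
noncomputable def insRev (a : A) : List (Finset A) → List (Finset A)
  | [] => [{a}]
  | B :: rest =>
    if ∃ b ∈ B, ¬ I a b then {a} :: B :: rest
    else
      match rest with
      | [] => [insert a B]
      | B' :: rest' =>
        if ∃ b ∈ B', ¬ I a b then insert a B :: B' :: rest'
        else B :: insRev a (B' :: rest')

/-- Insertion of a letter into a Foata chain. -/
noncomputable def ins (a : A) (C : List (Finset A)) : List (Finset A) :=
  (insRev I a C.reverse).reverse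

/-- Inserting a letter at the head region of an all-independent chain. -/
noncomputable def headIns (a : A) : List (Finset A) → List (Finset A)
  | [] => [{a}]
  | B :: C' => insert a B :: C'

lemma insRev_nil (a : A) : insRev I a [] = [{a}] := by unfold insRev; rfl

lemma insRev_dep (a : A) (B : Finset A) (rest) (h : ∃ b ∈ B, ¬ I a b) :
    insRev I a (B :: rest) = {a} :: B :: rest := by
  rw [insRev.eq_def]; simp only [if_pos h]

lemma insRev_single (a : A) (B : Finset A) (h : ¬ ∃ b ∈ B, ¬ I a b) :
    insRev I a [B] = [insert a B] := by
  rw [insRev.eq_def]; simp only [if_neg h]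

lemma insRev_join (a : A) (B B' : Finset A) (rest') (h : ¬ ∃ b ∈ B, ¬ I a b)
    (h' : ∃ b ∈ B', ¬ I a b) :
    insRev I a (B :: B' :: rest') = insert a B :: B' :: rest' := by
  rw [insRev.eq_def]; simp only [if_neg h, if_pos h']

lemma insRev_skip (a : A) (B B' : Finset A) (rest') (h : ¬ ∃ b ∈ B, ¬ I a b)
    (h' : ¬ ∃ b ∈ B', ¬ I a b) :
    insRev I a (B :: B' :: rest') = B :: insRev I a (B' :: rest') := by
  rw [insRev.eq_def]; simp only [if_neg h, if_neg h']

lemma insRev_all_indep (a : A) (R : List (Finset A)) (B : Finset A)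
    (h : ∀ B' ∈ R ++ [B], ∀ b ∈ B', I a b) :
    insRev I a (R ++ [B]) = R ++ [insert a B] := by
  induction R with
  | nil =>
    have hB : ¬ ∃ b ∈ B, ¬ I a b := by
      push_neg; exact h B (by simp)
    simpa using insRev_single I a B hB
  | cons X R' ih =>
    have hX : ¬ ∃ b ∈ X, ¬ I a b := by
      push_neg; exact h X (by simp)
    have hrec : insRev I a (R' ++ [B]) = R' ++ [insert a B] :=
      ih (fun B' hB' => h B' (by simp at hB' ⊢; tauto))
    cases R' with
    | nil =>
      have hB : ¬ ∃ b ∈ B, ¬ I a b := by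
        push_neg; exact h B (by simp)
      rw [List.cons_append, List.nil_append] at *
      rw [insRev_skip I a X B [] hX hB, hrec]
      simp
    | cons Y R'' =>
      have hY : ¬ ∃ b ∈ Y, ¬ I a b := by
        push_neg; exact h Y (by simp)
      rw [List.cons_append]
      rw [show (Y :: R'') ++ [B] = Y :: (R'' ++ [B]) from rfl] at hrec ⊢
      rw [insRev_skip I a X Y (R'' ++ [B]) hX hY, hrec]
      simp

lemma insRev_indep_prefix_nil (a : A) (B : Finset A) (S : List (Finset A))
    (hd : ∃ b ∈ B, ¬ I a b) :
    insRev I a (B :: S) = {a} :: B :: S := insRev_dep I a B S hd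

lemma insRev_indep_prefix (a : A) (M₁ : List (Finset A)) (B₀ B : Finset A)
    (S : List (Finset A)) (hM : ∀ B' ∈ M₁ ++ [B₀], ∀ b ∈ B', I a b)
    (hd : ∃ b ∈ B, ¬ I a b) :
    insRev I a ((M₁ ++ [B₀]) ++ B :: S) = M₁ ++ insert a B₀ :: B :: S := by
  induction M₁ with
  | nil =>
    have h0 : ¬ ∃ b ∈ B₀, ¬ I a b := by push_neg; exact hM B₀ (by simp)
    simpa using insRev_join I a B₀ B S h0 hd
  | cons X M₁' ih =>
    have hX : ¬ ∃ b ∈ X, ¬ I a b := by push_neg; exact hM X (by simp)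
    have hrec := ih (fun B' hB' => hM B' (by simp at hB' ⊢; tauto))
    cases M₁' with
    | nil =>
      have h0 : ¬ ∃ b ∈ B₀, ¬ I a b := by push_neg; exact hM B₀ (by simp)
      simp only [List.nil_append] at hrec
      rw [show ((X :: ([] : List (Finset A))) ++ [B₀]) ++ B :: S = X :: B₀ :: B :: S by simp]
      rw [insRev_skip I a X B₀ (B :: S) hX h0]
      rw [insRev_join I a B₀ B S h0 hd]
      simp
    | cons Y M₁'' =>
      have hY : ¬ ∃ b ∈ Y, ¬ I a b := by push_neg; exact hM Y (by simp)
      rw [show ((X :: Y :: M₁'') ++ [B₀]) ++ B :: S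
          = X :: (((Y :: M₁'') ++ [B₀]) ++ B :: S) by simp]
      rw [show ((Y :: M₁'') ++ [B₀]) ++ B :: S = Y :: ((M₁'' ++ [B₀]) ++ B :: S) by simp]
      rw [insRev_skip I a X Y _ hX hY]
      rw [← show ((Y :: M₁'') ++ [B₀]) ++ B :: S = Y :: ((M₁'' ++ [B₀]) ++ B :: S) by simp]
      rw [hrec]
      simp

lemma ins_eq_of_indep (a : A) (C : List (Finset A)) (h : ∀ B ∈ C, ∀ b ∈ B, I a b) :
    ins I a C = headIns a C := by
  cases C with
  | nil => simp [ins, insRev_nil, headIns]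
  | cons B C' =>
    have : (B :: C').reverse = C'.reverse ++ [B] := by simp
    rw [ins, this, insRev_all_indep I a C'.reverse B
      (by intro B' hB'; simp at hB'; rcases hB' with h' | h'
          · exact h B' (by simp [h'])
          · subst h'; exact h B' (by simp))]
    simp [headIns]

lemma ins_eq_of_dep (a : A) (L : List (Finset A)) (B : Finset A) (M : List (Finset A))
    (hd : ∃ b ∈ B, ¬ I a b) (hM : ∀ B' ∈ M, ∀ b ∈ B', I a b) :
    ins I a (L ++ B :: M) = L ++ B :: headIns a M := by
  cases M with
  | nil =>
    have : (L ++ [B]).reverse = B :: L.reverse := by simp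
    rw [ins, show L ++ B :: ([] : List (Finset A)) = L ++ [B] from rfl, this,
      insRev_dep I a B L.reverse hd]
    simp [headIns]
  | cons B₀ M' =>
    have hrev : (L ++ B :: B₀ :: M').reverse = (M'.reverse ++ [B₀]) ++ B :: L.reverse := by
      simp
    rw [ins, hrev, insRev_indep_prefix I a M'.reverse B₀ B L.reverse
      (by intro B' hB'; simp at hB'; rcases hB' with h' | h'
          · exact hM B' (by simp [h'])
          · subst h'; exact hM B' (by simp))
      hd]
    simp [headIns]

lemma dep_decomp (a : A) (C : List (Finset A)) :
    (∀ B ∈ C, ∀ b ∈ B, I a b) ∨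
      ∃ L B M, C = L ++ B :: M ∧ (∃ b ∈ B, ¬ I a b) ∧ ∀ B' ∈ M, ∀ b ∈ B', I a b := by
  induction C using List.reverseRecOn with
  | nil => left; simp
  | append_singleton D B ih =>
    by_cases hd : ∃ b ∈ B, ¬ I a b
    · right; exact ⟨D, B, [], by simp, hd, by simp⟩
    · push_neg at hd
      rcases ih with h | ⟨L, Bd, M, rfl, hdd, hM⟩
      · left; intro B' hB'
        simp at hB'
        rcases hB' with h' | h'
        · exact h B' h'
        · subst h'; exact hd
      · right
        refine ⟨L, Bd, M ++ [B], by simp, hdd, ?_⟩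
        intro B' hB'
        simp at hB'
        rcases hB' with h' | h'
        · exact hM B' h'
        · subst h'; exact hd


/-- `headIns` only enlarges entries pointwise. -/
lemma headIns_get?_subset (a : A) (M : List (Finset A)) (j : ℕ) (B : Finset A)
    (h : M[j]? = some B) : ∃ B', (headIns a M)[j]? = some B' ∧ B ⊆ B' := by
  cases M with
  | nil => simp at h
  | cons B₀ M' =>
    cases j with
    | zero =>
      have hB : B₀ = B := by simpa using h
      subst hB
      exact ⟨insert a B₀, by simp [headIns], Finset.subset_insert _ _⟩
    | succ j' =>
      simp only [List.getElem?_cons_succ] at h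
      exact ⟨B, by simp [headIns, h], subset_rfl⟩

lemma headIns_mem (a : A) (M : List (Finset A)) :
    ∃ B', (headIns a M)[0]? = some B' ∧ a ∈ B' := by
  cases M with
  | nil => exact ⟨{a}, by simp [headIns], by simp⟩
  | cons B₀ M' => exact ⟨insert a B₀, by simp [headIns], Finset.mem_insert_self _ _⟩

lemma headIns_length (a : A) (M : List (Finset A)) :
    M.length ≤ (headIns a M).length := by
  cases M <;> simp [headIns]

lemma get?_append_mono {P M M' : List (Finset A)}
    (h : ∀ (j : ℕ) (B : Finset A), M[j]? = some B → ∃ B', M'[j]? = some B' ∧ B ⊆ B')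
    (j : ℕ) (B : Finset A) (hj : (P ++ M)[j]? = some B) :
    ∃ B', (P ++ M')[j]? = some B' ∧ B ⊆ B' := by
  by_cases hlt : j < P.length
  · rw [List.getElem?_append, if_pos hlt] at hj ⊢
    exact ⟨B, hj, subset_rfl⟩
  · push_neg at hlt
    rw [List.getElem?_append_right hlt] at hj ⊢
    exact h _ _ hj

lemma ins_length (a : A) (C : List (Finset A)) :
    C.length ≤ (ins I a C).length := by
  rcases dep_decomp I a C with h | ⟨L, B, M, rfl, hd, hM⟩
  · rw [ins_eq_of_indep I a C h]
    cases C <;> simp [headIns]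
  · rw [ins_eq_of_dep I a L B M hd hM]
    have := headIns_length a M
    simp only [List.length_append, List.length_cons]
    omega

lemma ins_get?_subset (a : A) (C : List (Finset A)) (j : ℕ) (B : Finset A)
    (h : C[j]? = some B) : ∃ B', (ins I a C)[j]? = some B' ∧ B ⊆ B' := by
  rcases dep_decomp I a C with hind | ⟨L, Bd, M, rfl, hd, hM⟩
  · rw [ins_eq_of_indep I a C hind]
    exact headIns_get?_subset a C j B h
  · rw [ins_eq_of_dep I a L Bd M hd hM]
    rw [show L ++ Bd :: M = (L ++ [Bd]) ++ M by simp] at h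
    rw [show L ++ Bd :: headIns a M = (L ++ [Bd]) ++ headIns a M by simp]
    exact get?_append_mono (headIns_get?_subset a M) j B h

lemma ins_mem_get? (a : A) (C : List (Finset A)) :
    ∃ (j : ℕ) (B' : Finset A), (ins I a C)[j]? = some B' ∧ a ∈ B' := by
  rcases dep_decomp I a C with hind | ⟨L, Bd, M, rfl, hd, hM⟩
  · rw [ins_eq_of_indep I a C hind]
    obtain ⟨B', h1, h2⟩ := headIns_mem a C
    exact ⟨0, B', h1, h2⟩
  · rw [ins_eq_of_dep I a L Bd M hd hM,
      show L ++ Bd :: headIns a M = (L ++ [Bd]) ++ headIns a M by simp]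
    obtain ⟨B', h1, h2⟩ := headIns_mem a M
    refine ⟨L.length + 1, B', ?_, h2⟩
    rw [List.getElem?_append_right (by simp)]
    simpa using h1

lemma mem_of_get?_some {M : List (Finset A)} {j : ℕ} {B : Finset A}
    (h : M[j]? = some B) : B ∈ M := by
  rw [List.getElem?_eq_some_iff] at h
  obtain ⟨hj, rfl⟩ := h
  exact List.getElem_mem _

lemma ins_take_dep (a : A) (C : List (Finset A)) (j₀ : ℕ) (B₀ : Finset A)
    (h0 : C[j₀]? = some B₀) (hd : ∃ b ∈ B₀, ¬ I a b) :
    (ins I a C).take (j₀ + 1) = C.take (j₀ + 1) ∧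
      ∃ (j : ℕ) (B' : Finset A), j₀ < j ∧ (ins I a C)[j]? = some B' ∧ a ∈ B' := by
  rcases dep_decomp I a C with hind | ⟨L, Bd, M, rfl, hdd, hM⟩
  · exfalso
    obtain ⟨b, hb, hnb⟩ := hd
    exact hnb (hind B₀ (mem_of_get?_some h0) b hb)
  · have hj₀ : j₀ ≤ L.length := by
      by_contra hc
      push_neg at hc
      rw [show L ++ Bd :: M = (L ++ [Bd]) ++ M by simp,
        List.getElem?_append_right (by
          simp only [List.length_append, List.length_cons, List.length_nil]; omega)] at h0
      obtain ⟨b, hb, hnb⟩ := hd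
      exact hnb (hM B₀ (mem_of_get?_some h0) b hb)
    rw [ins_eq_of_dep I a L Bd M hdd hM]
    constructor
    · rw [show L ++ Bd :: headIns a M = (L ++ [Bd]) ++ headIns a M by simp,
        show L ++ Bd :: M = (L ++ [Bd]) ++ M by simp,
        List.take_append_of_le_length (l₂ := headIns a M) (show j₀ + 1 ≤ (L ++ [Bd]).length by
          simp only [List.length_append, List.length_cons, List.length_nil]; omega),
        List.take_append_of_le_length (l₂ := M) (show j₀ + 1 ≤ (L ++ [Bd]).length by
          simp only [List.length_append, List.length_cons, List.length_nil]; omega)]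
    · obtain ⟨B', h1, h2⟩ := headIns_mem a M
      refine ⟨L.length + 1, B', by omega, ?_, h2⟩
      rw [show L ++ Bd :: headIns a M = (L ++ [Bd]) ++ headIns a M by simp,
        List.getElem?_append_right (by simp)]
      simpa using h1


----------------------------------------------------------------
-- Algebraic lemmas
----------------------------------------------------------------

lemma traceOf_commute {a b : A} (h : I a b) :
    Commute (traceOf A I a) (traceOf A I b) := by
  have h1 : (traceCon A I) (FreeMonoid.of a * FreeMonoid.of b)
      (FreeMonoid.of b * FreeMonoid.of a) :=
    ConGen.Rel.of _ _ ⟨a, b, h, rfl, rfl⟩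
  have h2 : (traceCon A I).mk' (FreeMonoid.of a * FreeMonoid.of b)
      = (traceCon A I).mk' (FreeMonoid.of b * FreeMonoid.of a) := (Con.eq _).mpr h1
  simpa [map_mul, traceOf, Commute, SemiconjBy] using h2

/-- The image of a word in the trace monoid. -/
noncomputable def mkW (l : List A) : TraceMonoid A I := (l.map (traceOf A I)).prod

lemma mkW_nil : mkW I ([] : List A) = 1 := rfl

lemma mkW_cons (a : A) (l : List A) :
    mkW I (a :: l) = traceOf A I a * mkW I l := by simp [mkW]

lemma mkW_append (l₁ l₂ : List A) : mkW I (l₁ ++ l₂) = mkW I l₁ * mkW I l₂ := by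
  simp [mkW]

lemma commute_mkW {a : A} {l : List A} (h : ∀ b ∈ l, I a b) :
    Commute (traceOf A I a) (mkW I l) := by
  apply Commute.list_prod_right
  intro x hx
  rw [List.mem_map] at hx
  obtain ⟨b, hb, rfl⟩ := hx
  exact traceOf_commute I (h b hb)

lemma wB_eq_mkW (B : Finset A) : wB A I B = mkW I B.toList := rfl

lemma commute_wB {a : A} {B : Finset A} (h : ∀ b ∈ B, I a b) :
    Commute (traceOf A I a) (wB A I B) := by
  rw [wB_eq_mkW]
  exact commute_mkW I (fun b hb => h b (Finset.mem_toList.mp hb))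

lemma wB_insert (hirr : Irreflexive I) {a : A} {B : Finset A} (hcl : IsClique A I B)
    (hind : ∀ b ∈ B, I a b) :
    wB A I (insert a B) = wB A I B * traceOf A I a := by
  have ha : a ∉ B := fun hmem => hirr a (hind a hmem)
  have perm : ((insert a B).toList.map (traceOf A I)) ~ ((a :: B.toList).map (traceOf A I)) :=
    (Finset.toList_insert ha).map _
  have pw : List.Pairwise Commute ((a :: B.toList).map (traceOf A I)) := by
    rw [List.map_cons, List.pairwise_cons]
    constructor
    · intro x hx
      rw [List.mem_map] at hx
      obtain ⟨b, hb, rfl⟩ := hx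
      exact traceOf_commute I (hind b (Finset.mem_toList.mp hb))
    · refine List.Pairwise.map _ (fun x y hxy => hxy) ?_
      refine List.Pairwise.imp_of_mem ?_ (Finset.nodup_toList B)
      intro x y hx hy hne
      exact traceOf_commute I (hcl.2 x (Finset.mem_toList.mp hx) y (Finset.mem_toList.mp hy) hne)
  have := (perm.symm.prod_eq' pw)
  rw [wB]
  rw [← this, List.map_cons, List.prod_cons]
  exact (commute_wB I hind).eq ▸ ((commute_wB I hind).eq)

lemma wProd_nil : wProd A I [] = 1 := rfl

lemma wProd_cons (B : Finset A) (L : List (Finset A)) :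
    wProd A I (B :: L) = wB A I B * wProd A I L := by simp [wProd]

lemma wProd_append (L₁ L₂ : List (Finset A)) :
    wProd A I (L₁ ++ L₂) = wProd A I L₁ * wProd A I L₂ := by simp [wProd]

lemma commute_wProd {a : A} {L : List (Finset A)} (h : ∀ B ∈ L, ∀ b ∈ B, I a b) :
    Commute (traceOf A I a) (wProd A I L) := by
  apply Commute.list_prod_right
  intro x hx
  rw [List.mem_map] at hx
  obtain ⟨B, hB, rfl⟩ := hx
  exact commute_wB I (h B hB)

lemma headIns_prod (hirr : Irreflexive I) (a : A) (M : List (Finset A))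
    (hcl : ∀ B ∈ M, IsClique A I B) (hind : ∀ B ∈ M, ∀ b ∈ B, I a b) :
    wProd A I (headIns a M) = wProd A I M * traceOf A I a := by
  cases M with
  | nil =>
    show wProd A I [{a}] = wProd A I [] * traceOf A I a
    rw [wProd_cons, wProd_nil, wB_eq_mkW]
    simp [mkW]
  | cons B₀ M' =>
    show wProd A I (insert a B₀ :: M') = wProd A I (B₀ :: M') * traceOf A I a
    rw [wProd_cons, wProd_cons,
      wB_insert I hirr (hcl B₀ (by simp)) (hind B₀ (by simp))]
    have hc : Commute (traceOf A I a) (wProd A I M') :=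
      commute_wProd I (fun B hB => hind B (by simp [hB]))
    rw [mul_assoc, hc.eq, ← mul_assoc]

lemma ins_prod (hirr : Irreflexive I) (a : A) (C : List (Finset A))
    (hc : ∀ B ∈ C, IsClique A I B) :
    wProd A I (ins I a C) = wProd A I C * traceOf A I a := by
  rcases dep_decomp I a C with hind | ⟨L, B, M, rfl, hd, hM⟩
  · rw [ins_eq_of_indep I a C hind]
    exact headIns_prod I hirr a C hc hind
  · rw [ins_eq_of_dep I a L B M hd hM]
    rw [wProd_append, wProd_cons, wProd_append, wProd_cons,
      headIns_prod I hirr a M (fun B' hB' => hc B' (by simp [hB'])) hM]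
    rw [mul_assoc, mul_assoc]

----------------------------------------------------------------
-- Chain preservation
----------------------------------------------------------------

lemma clique_insert (hsym : Symmetric I) (hirr : Irreflexive I) {a : A} {B : Finset A}
    (hcl : IsClique A I B) (hind : ∀ b ∈ B, I a b) : IsClique A I (insert a B) := by
  constructor
  · exact ⟨a, Finset.mem_insert_self _ _⟩
  · intro x hx y hy hxy
    rcases Finset.mem_insert.mp hx with rfl | hx' <;>
      rcases Finset.mem_insert.mp hy with rfl | hy'
    · exact absurd rfl hxy
    · exact hind y hy'
    · exact hsym (hind x hx')
    · exact hcl.2 x hx' y hy' hxy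

lemma singleton_clique (hirr : Irreflexive I) (a : A) : IsClique A I {a} := by
  refine ⟨⟨a, by simp⟩, ?_⟩
  intro x hx y hy hxy
  simp at hx hy
  subst hx; subst hy; exact absurd rfl hxy

lemma ins_fchain (hsym : Symmetric I) (hirr : Irreflexive I) (a : A) {C : List (Finset A)}
    (h : FChain I C) : FChain I (ins I a C) := by
  obtain ⟨hcl, hch⟩ := h
  rcases dep_decomp I a C with hind | ⟨L, B, M, rfl, hd, hM⟩
  · rw [ins_eq_of_indep I a C hind]
    cases C with
    | nil =>
      exact ⟨by intro B hB; simp [headIns] at hB; subst hB; exact singleton_clique I hirr a,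
        by simp [headIns]⟩
    | cons B₀ C' =>
      constructor
      · intro B hB
        simp only [headIns] at hB
        rcases List.mem_cons.mp hB with rfl | hB'
        · exact clique_insert I hsym hirr (hcl B₀ (by simp)) (hind B₀ (by simp))
        · exact hcl B (by simp [hB'])
      · show List.IsChain (Rdep I) (insert a B₀ :: C')
        rw [List.isChain_cons] at hch ⊢
        refine ⟨?_, hch.2⟩
        intro Y hY x hx
        obtain ⟨b, hb, hnb⟩ := hch.1 Y hY x hx
        exact ⟨b, Finset.mem_insert_of_mem hb, hnb⟩
  · rw [ins_eq_of_dep I a L B M hd hM]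
    have hclM : ∀ B' ∈ M, IsClique A I B' := fun B' hB' => hcl B' (by simp [hB'])
    constructor
    · intro B' hB'
      rw [List.mem_append, List.mem_cons] at hB'
      rcases hB' with h' | h' | h'
      · exact hcl B' (by simp [h'])
      · subst h'; exact hcl B' (by simp)
      · cases M with
        | nil =>
          simp [headIns] at h'
          subst h'; exact singleton_clique I hirr a
        | cons B₀ M' =>
          simp only [headIns] at h'
          rcases List.mem_cons.mp h' with rfl | h''
          · exact clique_insert I hsym hirr (hclM B₀ (by simp)) (hM B₀ (by simp))
          · exact hclM B' (by simp [h''])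
    · rw [List.isChain_append] at hch ⊢
      refine ⟨hch.1, ?_, ?_⟩
      · -- Chain' (B :: headIns a M)
        have hBM : List.IsChain (Rdep I) (B :: M) := hch.2.1
        cases M with
        | nil =>
          simp only [headIns]
          refine List.isChain_cons_cons.mpr ⟨?_, by simp⟩
          intro x hx
          simp at hx; subst hx
          exact hd
        | cons B₀ M' =>
          simp only [headIns]
          rw [List.isChain_cons_cons] at hBM
          rw [List.isChain_cons_cons]
          constructor
          · intro x hx
            rcases Finset.mem_insert.mp hx with rfl | hx'
            · exact hd
            · exact hBM.1 x hx'
          · rw [List.isChain_cons] at hBM ⊢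
            refine ⟨?_, hBM.2.2⟩
            intro Y hY x hx
            obtain ⟨b, hb, hnb⟩ := hBM.2.1 Y hY x hx
            exact ⟨b, Finset.mem_insert_of_mem hb, hnb⟩
      · intro x hx y hy
        have hy' : y ∈ (B :: M).head? := by
          cases M <;> simp [headIns] at hy ⊢ <;> simp [hy]
        exact hch.2.2 x hx y hy'


----------------------------------------------------------------
-- Iterated insertion
----------------------------------------------------------------

/-- Insert all letters of a word into a chain, left to right. -/
noncomputable def chainIns (C : List (Finset A)) (l : List A) : List (Finset A) :=
  l.foldl (fun D x => ins I x D) C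

lemma chainIns_nil (C : List (Finset A)) : chainIns I C [] = C := rfl

lemma chainIns_cons (C : List (Finset A)) (a : A) (l : List A) :
    chainIns I C (a :: l) = chainIns I (ins I a C) l := rfl

lemma chainIns_append (C : List (Finset A)) (l₁ l₂ : List A) :
    chainIns I C (l₁ ++ l₂) = chainIns I (chainIns I C l₁) l₂ :=
  List.foldl_append

lemma chainIns_fchain (hsym : Symmetric I) (hirr : Irreflexive I) (l : List A)
    {C : List (Finset A)} (h : FChain I C) : FChain I (chainIns I C l) := by
  induction l generalizing C with
  | nil => exact h
  | cons a l ih => exact ih (ins_fchain I hsym hirr a h)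

lemma chainIns_prod (hsym : Symmetric I) (hirr : Irreflexive I) (l : List A)
    {C : List (Finset A)} (h : FChain I C) :
    wProd A I (chainIns I C l) = wProd A I C * mkW I l := by
  induction l generalizing C with
  | nil => simp [chainIns_nil, mkW_nil]
  | cons a l ih =>
    rw [chainIns_cons, ih (ins_fchain I hsym hirr a h), ins_prod I hirr a C h.1,
      mkW_cons, mul_assoc]

lemma chainIns_length (l : List A) (C : List (Finset A)) :
    C.length ≤ (chainIns I C l).length := by
  induction l generalizing C with
  | nil => simp [chainIns_nil]
  | cons a l ih => exact le_trans (ins_length I a C) (ih (ins I a C))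

lemma chainIns_get?_subset (l : List A) (C : List (Finset A)) (j : ℕ) (B : Finset A)
    (h : C[j]? = some B) :
    ∃ B', (chainIns I C l)[j]? = some B' ∧ B ⊆ B' := by
  induction l generalizing C B with
  | nil => exact ⟨B, h, subset_rfl⟩
  | cons a l ih =>
    obtain ⟨B₁, h1, h2⟩ := ins_get?_subset I a C j B h
    obtain ⟨B₂, h3, h4⟩ := ih (ins I a C) B₁ h1
    exact ⟨B₂, h3, h2.trans h4⟩

lemma chainIns_mem (l : List A) (C : List (Finset A)) :
    ∀ a ∈ l, ∃ (j : ℕ) (B : Finset A), (chainIns I C l)[j]? = some B ∧ a ∈ B := by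
  induction l generalizing C with
  | nil => simp
  | cons x l ih =>
    intro a ha
    rcases List.mem_cons.mp ha with rfl | ha'
    · obtain ⟨j, B, h1, h2⟩ := ins_mem_get? I a C
      obtain ⟨B', h3, h4⟩ := chainIns_get?_subset I l (ins I a C) j B h1
      exact ⟨j, B', h3, h4 h2⟩
    · exact ih (ins I x C) a ha'

lemma take_eq_of_take_eq {α : Type*} {X Y : List α} {m n : ℕ} (hmn : m ≤ n)
    (h : X.take n = Y.take n) : X.take m = Y.take m := by
  calc X.take m = (X.take n).take m := by rw [List.take_take, Nat.min_eq_left hmn]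
    _ = (Y.take n).take m := by rw [h]
    _ = Y.take m := by rw [List.take_take, Nat.min_eq_left hmn]

lemma chainIns_take (m : ℕ) (l : List A) (C : List (Finset A))
    (hdep : ∀ a ∈ l, ∃ (j : ℕ) (B : Finset A), m ≤ j ∧ C[j]? = some B ∧ ∃ b ∈ B, ¬ I a b) :
    (chainIns I C l).take (m + 1) = C.take (m + 1) ∧
      ∀ a ∈ l, ∃ (j : ℕ) (B : Finset A), m + 1 ≤ j ∧
        (chainIns I C l)[j]? = some B ∧ a ∈ B := by
  induction l generalizing C with
  | nil => exact ⟨rfl, by simp⟩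
  | cons a l ih =>
    obtain ⟨j₀, B₀, hm, h0, hd⟩ := hdep a (by simp)
    obtain ⟨htake, j₁, B₁, hj₁, h1, ha1⟩ := ins_take_dep I a C j₀ B₀ h0 hd
    have hdep' : ∀ x ∈ l, ∃ (j : ℕ) (B : Finset A), m ≤ j ∧
        (ins I a C)[j]? = some B ∧ ∃ b ∈ B, ¬ I x b := by
      intro x hx
      obtain ⟨j, B, hmj, hB, b, hb, hnb⟩ := hdep x (List.mem_cons_of_mem _ hx)
      obtain ⟨B', hB', hsub⟩ := ins_get?_subset I a C j B hB
      exact ⟨j, B', hmj, hB', b, hsub hb, hnb⟩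
    obtain ⟨htake2, hmem2⟩ := ih (ins I a C) hdep'
    rw [chainIns_cons]
    refine ⟨?_, ?_⟩
    · rw [htake2]
      exact take_eq_of_take_eq (by omega) htake
    · intro x hx
      rcases List.mem_cons.mp hx with hxa | hx'
      · subst hxa
        obtain ⟨B₂, h3, h4⟩ := chainIns_get?_subset I l _ j₁ B₁ h1
        exact ⟨j₁, B₂, by omega, h3, h4 ha1⟩
      · exact hmem2 x hx'

/-- The word spelled by a list of cliques. -/
noncomputable def flat (Q : List (Finset A)) : List A := (Q.map Finset.toList).flatten

lemma flat_nil : flat ([] : List (Finset A)) = [] := rfl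

lemma flat_cons (B : Finset A) (Q : List (Finset A)) :
    flat (B :: Q) = B.toList ++ flat Q := by simp [flat]

lemma flat_append (Q₁ Q₂ : List (Finset A)) :
    flat (Q₁ ++ Q₂) = flat Q₁ ++ flat Q₂ := by simp [flat]

lemma blocks_insert (Q : List (Finset A)) :
    ∀ (C : List (Finset A)) (m : ℕ), List.IsChain (Rdep I) Q →
    (∀ B ∈ Q.head?, ∀ a ∈ B, ∃ (j : ℕ) (B' : Finset A), m ≤ j ∧ C[j]? = some B' ∧
        ∃ b ∈ B', ¬ I a b) →
    (chainIns I C (flat Q)).take (m + 1) = C.take (m + 1) ∧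
      (∀ (j : ℕ) (B : Finset A), C[j]? = some B →
        ∃ B', (chainIns I C (flat Q))[j]? = some B' ∧ B ⊆ B') ∧
      (∀ (i : ℕ) (B : Finset A), Q[i]? = some B → ∀ a ∈ B,
        ∃ (j : ℕ) (B' : Finset A), m + 1 + i ≤ j ∧
          (chainIns I C (flat Q))[j]? = some B' ∧ a ∈ B') := by
  induction Q with
  | nil =>
    intro C m _ _
    refine ⟨rfl, fun j B h => ⟨B, h, subset_rfl⟩, ?_⟩
    intro i B h
    simp at h
  | cons B Q' ih =>
    intro C m hch hhead
    rw [flat_cons, chainIns_append]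
    set C₁ := chainIns I C B.toList with hC₁
    obtain ⟨htake1, hmem1⟩ := chainIns_take I m B.toList C
      (by
        intro a ha
        exact hhead B (by simp) a (Finset.mem_toList.mp ha))
    rw [List.isChain_cons] at hch
    have hhead' : ∀ B' ∈ Q'.head?, ∀ a ∈ B', ∃ (j : ℕ) (B'' : Finset A), m + 1 ≤ j ∧
        C₁[j]? = some B'' ∧ ∃ b ∈ B'', ¬ I a b := by
      intro B' hB' a ha
      obtain ⟨b, hb, hnb⟩ := hch.1 B' hB' a ha
      obtain ⟨j, B'', hj, hB'', hbB''⟩ := hmem1 b (Finset.mem_toList.mpr hb)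
      exact ⟨j, B'', hj, hB'', b, hbB'', hnb⟩
    obtain ⟨htake2, hsub2, hpos2⟩ := ih C₁ (m + 1) hch.2 hhead'
    refine ⟨?_, ?_, ?_⟩
    · rw [take_eq_of_take_eq (by omega) htake2]
      exact htake1
    · intro j B' hB'
      obtain ⟨B₁, h1, h2⟩ := chainIns_get?_subset I B.toList C j B' hB'
      obtain ⟨B₂, h3, h4⟩ := hsub2 j B₁ h1
      exact ⟨B₂, h3, h2.trans h4⟩
    · intro i B' hB' a ha
      cases i with
      | zero =>
        have hBB : B' = B := by
          have := hB'
          simp only [List.getElem?_cons_zero, Option.some.injEq] at this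
          exact this.symm
        subst hBB
        obtain ⟨j, B₁, hj, h1, h2⟩ := hmem1 a (Finset.mem_toList.mpr ha)
        obtain ⟨B₂, h3, h4⟩ := hsub2 j B₁ h1
        exact ⟨j, B₂, by omega, h3, h4 h2⟩
      | succ i' =>
        have hQ' : Q'[i']? = some B' := by simpa using hB'
        obtain ⟨j, B₂, hj, h3, h4⟩ := hpos2 i' B' hQ' a ha
        exact ⟨j, B₂, by omega, h3, h4⟩

lemma prefix_positions (P : List (Finset A)) (C : List (Finset A))
    (hch : List.IsChain (Rdep I) P) :
    ∀ (i : ℕ) (B : Finset A), P[i]? = some B → ∀ a ∈ B,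
      ∃ (j : ℕ) (B' : Finset A), i ≤ j ∧ (chainIns I C (flat P))[j]? = some B' ∧ a ∈ B' := by
  cases P with
  | nil => intro i B h; simp at h
  | cons B₀ P' =>
    rw [flat_cons, chainIns_append]
    set C₁ := chainIns I C B₀.toList with hC₁
    rw [List.isChain_cons] at hch
    have hhead : ∀ B' ∈ P'.head?, ∀ a ∈ B', ∃ (j : ℕ) (B'' : Finset A), 0 ≤ j ∧
        C₁[j]? = some B'' ∧ ∃ b ∈ B'', ¬ I a b := by
      intro B' hB' a ha
      obtain ⟨b, hb, hnb⟩ := hch.1 B' hB' a ha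
      obtain ⟨j, B'', hB'', hbB''⟩ := chainIns_mem I B₀.toList C b (Finset.mem_toList.mpr hb)
      exact ⟨j, B'', by omega, hB'', b, hbB'', hnb⟩
    obtain ⟨htake, hsub, hpos⟩ := blocks_insert I P' C₁ 0 hch.2 hhead
    intro i B hB a ha
    cases i with
    | zero =>
      have hBB : B = B₀ := by
        have := hB
        simp only [List.getElem?_cons_zero, Option.some.injEq] at this
        exact this.symm
      obtain ⟨j, B₁, h1, h2⟩ := chainIns_mem I B₀.toList C a
        (Finset.mem_toList.mpr (hBB ▸ ha))
      obtain ⟨B₂, h3, h4⟩ := hsub j B₁ h1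
      exact ⟨j, B₂, by omega, h3, h4 h2⟩
    | succ i' =>
      have hP' : P'[i']? = some B := by simpa using hB
      obtain ⟨j, B₂, hj, h3, h4⟩ := hpos i' B hP' a ha
      exact ⟨j, B₂, by omega, h3, h4⟩


----------------------------------------------------------------
-- Length considerations and representatives
----------------------------------------------------------------

lemma wProd_eq_mkW_flat (L : List (Finset A)) : wProd A I L = mkW I (flat L) := by
  induction L with
  | nil => simp [wProd_nil, flat_nil, mkW_nil]
  | cons B L ih => rw [wProd_cons, flat_cons, mkW_append, ih, wB_eq_mkW]

lemma exists_mkW (u : TraceMonoid A I) : ∃ l : List A, mkW I l = u := by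
  obtain ⟨x, rfl⟩ := Con.mk'_surjective u
  induction x using FreeMonoid.recOn with
  | one => exact ⟨[], by rw [mkW_nil, map_one]⟩
  | of_mul a xs ihx =>
    obtain ⟨l, hl⟩ := ihx
    exact ⟨a :: l, by rw [mkW_cons, hl, map_mul]; rfl⟩

noncomputable def lenHom : TraceMonoid A I →* Multiplicative ℕ :=
  Con.lift _ (FreeMonoid.lift fun _ => Multiplicative.ofAdd 1)
    (show traceCon A I ≤ _ from Con.conGen_le.mpr (by
      rintro x y ⟨a, b, hI, rfl, rfl⟩
      rw [Con.ker_rel]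
      simp [map_mul, FreeMonoid.lift_eval_of, mul_comm]))

lemma lenHom_traceOf (a : A) : lenHom I (traceOf A I a) = Multiplicative.ofAdd 1 := by
  rw [traceOf, lenHom, Con.lift_mk', FreeMonoid.lift_eval_of]

lemma lenHom_mkW (l : List A) : lenHom I (mkW I l) = Multiplicative.ofAdd l.length := by
  induction l with
  | nil => simp [mkW_nil]
  | cons a l ih =>
    rw [mkW_cons, map_mul, lenHom_traceOf, ih, List.length_cons]
    rw [← ofAdd_add]
    congr 1
    omega

lemma flat_length {L : List (Finset A)} (hc : ∀ B ∈ L, IsClique A I B) :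
    L.length ≤ (flat L).length := by
  induction L with
  | nil => simp [flat_nil]
  | cons B L ih =>
    rw [flat_cons, List.length_append, List.length_cons]
    have h1 : 1 ≤ B.toList.length := by
      rw [Finset.length_toList]
      exact Finset.card_pos.mpr (hc B (by simp)).1
    have h2 := ih (fun B' hB' => hc B' (by simp [hB']))
    omega

end FoataAux

open FoataAux in
/-- Left multiplication is a contraction for the Foata normal form metric:
`d(uv, uw) ≤ d(v, w)` for all `u, v, w ∈ M(A,I)`. -/
theorem dFNF_mul_left_le (A : Type) [Fintype A] (I : A → A → Prop)
    (hsym : Symmetric I) (hirr : Irreflexive I) :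
    ∀ u v w : TraceMonoid A I, dFNF A I (u * v) (u * w) ≤ dFNF A I v w := by
  intro u v w
  by_cases hvw : v = w
  · subst hvw
    simp [dFNF]
  by_cases huvw : u * v = u * w
  · rw [dFNF, if_pos huvw, dFNF, if_neg hvw]
    positivity
  rw [dFNF, if_neg huvw, dFNF, if_neg hvw]
  have key : rNat A I v w ≤ rNat A I (u * v) (u * w) := by
    rw [rNat, rNat]
    have hsub : {k : ℕ | ∃ P Lu Lv : List (Finset A), P.length = k ∧
          IsFNF A I (P ++ Lu) v ∧ IsFNF A I (P ++ Lv) w} ⊆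
        {k : ℕ | ∃ P Lu Lv : List (Finset A), P.length = k ∧
          IsFNF A I (P ++ Lu) (u * v) ∧ IsFNF A I (P ++ Lv) (u * w)} := by
      rintro k ⟨P, Lv, Lw, hlen, hfv, hfw⟩
      obtain ⟨lu, hlu⟩ := exists_mkW I u
      have hnilchain : FChain I ([] : List (Finset A)) := ⟨by simp, by simp⟩
      set C0 := chainIns I [] lu with hC0
      have hC0chain : FChain I C0 := chainIns_fchain I hsym hirr lu hnilchain
      have hC0prod : wProd A I C0 = u := by
        rw [hC0, chainIns_prod I hsym hirr lu hnilchain, wProd_nil, one_mul, hlu]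
      have hv1 := (isFoataChain_iff I _).mp hfv.1
      obtain ⟨hclv, hchv⟩ := hv1
      rw [List.isChain_append] at hchv
      have hw1 := (isFoataChain_iff I _).mp hfw.1
      obtain ⟨hclw, hchw⟩ := hw1
      rw [List.isChain_append] at hchw
      set C := chainIns I C0 (flat P) with hC
      have hCchain : FChain I C := chainIns_fchain I hsym hirr _ hC0chain
      have hCprod : wProd A I C = u * wProd A I P := by
        rw [hC, chainIns_prod I hsym hirr _ hC0chain, hC0prod, wProd_eq_mkW_flat]
      set Dv := chainIns I C (flat Lv) with hDv
      set Dw := chainIns I C (flat Lw) with hDw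
      have hDvchain : FChain I Dv := chainIns_fchain I hsym hirr _ hCchain
      have hDwchain : FChain I Dw := chainIns_fchain I hsym hirr _ hCchain
      have hDvprod : wProd A I Dv = u * v := by
        rw [hDv, chainIns_prod I hsym hirr _ hCchain, hCprod, ← wProd_eq_mkW_flat,
          mul_assoc, ← wProd_append, ← hfv.2]
      have hDwprod : wProd A I Dw = u * w := by
        rw [hDw, chainIns_prod I hsym hirr _ hCchain, hCprod, ← wProd_eq_mkW_flat,
          mul_assoc, ← wProd_append, ← hfw.2]
      rcases Nat.eq_zero_or_pos k with hk0 | hkpos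
      · subst hk0
        refine ⟨[], Dv, Dw, rfl, ?_, ?_⟩
        · exact ⟨(isFoataChain_iff I _).mpr hDvchain, by rw [List.nil_append, hDvprod]⟩
        · exact ⟨(isFoataChain_iff I _).mpr hDwchain, by rw [List.nil_append, hDwprod]⟩
      · -- k ≥ 1
        have hklt : k - 1 < P.length := by omega
        have hPk : P[k-1]? = some (P[k-1]'hklt) := List.getElem?_eq_getElem hklt
        have hlast : P.getLast? = some (P[k-1]'hklt) := by
          rw [List.getLast?_eq_getElem?, hlen]
          exact List.getElem?_eq_getElem (by omega)
        have hposP := prefix_positions I P C0 hchv.1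
        have hhead : ∀ (Lx : List (Finset A)),
            (∀ x ∈ P.getLast?, ∀ y ∈ Lx.head?, Rdep I x y) →
            ∀ B ∈ Lx.head?, ∀ a ∈ B, ∃ (j : ℕ) (B' : Finset A), k - 1 ≤ j ∧
              C[j]? = some B' ∧ ∃ b ∈ B', ¬ I a b := by
          intro Lx hlink B hB a ha
          have hrel : Rdep I (P[k-1]'hklt) B := hlink _ hlast B hB
          obtain ⟨b, hb, hnb⟩ := hrel a ha
          obtain ⟨j, B', hj, hB', hbB'⟩ := hposP (k-1) _ hPk b hb
          exact ⟨j, B', hj, hB', b, hbB', hnb⟩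
        have hk1 : k - 1 + 1 = k := by omega
        obtain ⟨htakev, _, _⟩ := blocks_insert I Lv C (k-1) hchv.2.1
          (hhead Lv hchv.2.2)
        obtain ⟨htakew, _, _⟩ := blocks_insert I Lw C (k-1) hchw.2.1
          (hhead Lw hchw.2.2)
        rw [hk1] at htakev htakew
        have hkC : k ≤ C.length := by
          obtain ⟨a, ha⟩ := (hclv _ (List.mem_append_left Lv (List.getElem_mem hklt))).1
          obtain ⟨j, B', hj, hB', _⟩ := hposP (k-1) _ hPk a ha
          have := (List.getElem?_eq_some_iff.mp hB').1
          rw [hC]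
          omega
        refine ⟨C.take k, Dv.drop k, Dw.drop k, ?_, ?_, ?_⟩
        · rw [List.length_take]
          omega
        · have heq : C.take k ++ Dv.drop k = Dv := by
            rw [← htakev, List.take_append_drop]
          rw [heq]
          exact ⟨(isFoataChain_iff I _).mpr hDvchain, hDvprod.symm⟩
        · have heq : C.take k ++ Dw.drop k = Dw := by
            rw [← htakew, List.take_append_drop]
          rw [heq]
          exact ⟨(isFoataChain_iff I _).mpr hDwchain, hDwprod.symm⟩
    have hbdd : BddAbove {k : ℕ | ∃ P Lu Lv : List (Finset A), P.length = k ∧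
        IsFNF A I (P ++ Lu) (u * v) ∧ IsFNF A I (P ++ Lv) (u * w)} := by
      refine ⟨Multiplicative.toAdd (lenHom I (u * v)), ?_⟩
      rintro k ⟨P, L1, L2, hlen, hf1, _⟩
      have hcl : ∀ B ∈ P ++ L1, IsClique A I B := hf1.1.1
      have h1 : k ≤ (P ++ L1).length := by
        rw [← hlen, List.length_append]; omega
      have h2 : (P ++ L1).length ≤ (flat (P ++ L1)).length := flat_length I hcl
      have h3 : Multiplicative.toAdd (lenHom I (u * v)) = (flat (P ++ L1)).length := by
        rw [hf1.2, wProd_eq_mkW_flat, lenHom_mkW]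
        rfl
      omega
    rcases Set.eq_empty_or_nonempty {k : ℕ | ∃ P Lu Lv : List (Finset A), P.length = k ∧
        IsFNF A I (P ++ Lu) v ∧ IsFNF A I (P ++ Lv) w} with he | hne
    · rw [he, csSup_empty]
      exact bot_le
    · exact csSup_le_csSup hbdd hne hsub
  exact zpow_le_zpow_right₀ one_le_two (neg_le_neg (Int.ofNat_le.mpr key))
end
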